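/- arXiv:2211.02511 — 7 statements merged into one kernel-verified Lean document; each statement's English description precedes it below -/
import Mathlib

section
/- Let q : ℝ → ℝ be continuous and τ-periodic for some τ > 0, and let w be a nontrivial solution of w'' = q·w on ℝ. If w(α) = w(β) = 0 for some α < β, then the negative part q⁻ = max(-q, 0) is not identically zero, and moreover β - α ≥ π · (max_{t ∈ [0,τ]} q⁻(t))^{-1/2}. -/
open Real Set Filter Topology

private lemma hill_uniq (q w : ℝ → ℝ) (C : ℝ) (hqb : ∀ t, |q t| ≤ C)
    (hw1 : Differentiable ℝ w) (hw2 : Differentiable ℝ (deriv w))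
    (hode : ∀ t, deriv (deriv w) t = q t * w t)
    (t₀ : ℝ) (h0 : w t₀ = 0) (h1 : deriv w t₀ = 0) : ∀ t, w t = 0 := by
  have hC0 : 0 ≤ C := le_trans (abs_nonneg _) (hqb 0)
  set K : NNReal := ⟨max 1 C, le_trans zero_le_one (le_max_left 1 C)⟩ with hKdef
  have hK : (K : ℝ) = max 1 C := rfl
  set v : ℝ → ℝ × ℝ → ℝ × ℝ := fun t u => (u.2, q t * u.1) with hv
  have hlip : ∀ t, LipschitzWith K (v t) := by
    intro t
    apply LipschitzWith.of_dist_le_mul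
    intro u u'
    rw [Prod.dist_eq, Prod.dist_eq]
    simp only [hv, Real.dist_eq]
    have h2 : |q t * u.1 - q t * u'.1| = |q t| * |u.1 - u'.1| := by
      rw [← abs_mul]; ring_nf
    apply max_le
    · calc |u.2 - u'.2| ≤ max |u.1 - u'.1| |u.2 - u'.2| := le_max_right _ _
        _ ≤ (K : ℝ) * max |u.1 - u'.1| |u.2 - u'.2| := by
            apply le_mul_of_one_le_left (le_max_of_le_right (abs_nonneg _))
            rw [hK]; exact le_max_left 1 C
    · rw [h2]
      calc |q t| * |u.1 - u'.1| ≤ C * max |u.1 - u'.1| |u.2 - u'.2| :=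
            mul_le_mul (hqb t) (le_max_left _ _) (abs_nonneg _) hC0
        _ ≤ (K : ℝ) * max |u.1 - u'.1| |u.2 - u'.2| := by
            apply mul_le_mul_of_nonneg_right _ (le_max_of_le_right (abs_nonneg _))
            rw [hK]; exact le_max_right 1 C
  intro t
  set f : ℝ → ℝ × ℝ := fun s => (w s, deriv w s) with hf
  have hfd : ∀ s, HasDerivAt f (v s (f s)) s := by
    intro s
    have ha : HasDerivAt w (deriv w s) s := (hw1 s).hasDerivAt
    have hb : HasDerivAt (deriv w) (q s * w s) s := by
      rw [← hode s]; exact (hw2 s).hasDerivAt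
    exact HasDerivAt.prodMk ha hb
  have key := ODE_solution_unique_of_mem_Ioo (v := v) (s := fun _ => (univ : Set (ℝ × ℝ)))
    (K := K) (f := f) (g := fun _ => ((0 : ℝ), (0 : ℝ)))
    (t₀ := t₀) (a := min t t₀ - 1) (b := max t t₀ + 1)
    (fun s _ => (hlip s).lipschitzOnWith)
    ⟨by have := min_le_right t t₀; linarith, by have := le_max_right t t₀; linarith⟩
    (fun s _ => ⟨hfd s, trivial⟩)
    (fun s _ => ⟨by convert hasDerivAt_const s ((0:ℝ),(0:ℝ)) using 1; simp [hv], trivial⟩)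
    (by simp [hf, h0, h1])
  have ht : t ∈ Ioo (min t t₀ - 1) (max t t₀ + 1) :=
    ⟨by have := min_le_left t t₀; linarith, by have := le_max_left t t₀; linarith⟩
  have := key ht
  exact congrArg Prod.fst this

private lemma hill_sturm (q w : ℝ → ℝ) (M α β : ℝ) (hMpos : 0 < M)
    (hqM : ∀ t, -M ≤ q t)
    (hw1 : Differentiable ℝ w) (hw2 : Differentiable ℝ (deriv w))
    (hode : ∀ t, deriv (deriv w) t = q t * w t)
    (huniq : ∀ t₀, w t₀ = 0 → deriv w t₀ ≠ 0)
    (hαβ : α < β) (hwα : w α = 0) (hwβ : w β = 0)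
    (hspacing : β - α < Real.pi / Real.sqrt M)
    (hpos : 0 < deriv w α) : False := by
  have hwcont : Continuous w := hw1.continuous
  set m : ℝ := Real.sqrt M with hmdef
  have hm0 : 0 < m := Real.sqrt_pos.mpr hMpos
  have hmsq : m ^ 2 = M := Real.sq_sqrt hMpos.le
  -- bound: for α ≤ x ≤ β with α < x, 0 < m*(x-α) < π
  have hlt : ∀ x, x ≤ β → m * (x - α) < Real.pi := by
    intro x hx
    have : x - α < Real.pi / m := lt_of_le_of_lt (by linarith) hspacing
    calc m * (x - α) < m * (Real.pi / m) := by
          exact (mul_lt_mul_iff_right₀ hm0).mpr this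
      _ = Real.pi := by field_simp
  -- w is positive just to the right of α
  have hda : HasDerivAt w (deriv w α) α := (hw1 α).hasDerivAt
  have hslope := hasDerivAt_iff_tendsto_slope.mp hda
  have h1 : ∀ᶠ t in 𝓝[≠] α, 0 < slope w α t := hslope.eventually (eventually_gt_nhds hpos)
  have h2 : ∀ᶠ t in 𝓝[>] α, 0 < slope w α t :=
    h1.filter_mono (nhdsWithin_mono α (fun t ht => ne_of_gt ht))
  have h3 : ∀ᶠ t in 𝓝[>] α, t < β := (eventually_lt_nhds hαβ).filter_mono nhdsWithin_le_nhds
  obtain ⟨u, hu, hsub⟩ := mem_nhdsGT_iff_exists_Ioc_subset.mp (h2.and h3)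
  have hwu : ∀ t, t ∈ Ioc α u → 0 < w t ∧ t < β := by
    intro t ht
    obtain ⟨hslt, htβ⟩ := hsub ht
    refine ⟨?_, htβ⟩
    rw [slope_def_field, hwα, sub_zero] at hslt
    have htα : 0 < t - α := sub_pos.mpr ht.1
    have := mul_pos hslt htα
    rwa [div_mul_cancel₀ _ (ne_of_gt htα)] at this
  have huself := hwu u ⟨hu, le_refl u⟩
  -- γ : first zero after α
  set S : Set ℝ := {t : ℝ | w t = 0} ∩ Icc u β with hS
  have hScomp : IsCompact S :=
    isCompact_Icc.inter_left (isClosed_singleton.preimage hwcont)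
  have hβS : β ∈ S := ⟨hwβ, ⟨huself.2.le, le_refl β⟩⟩
  have hSne : S.Nonempty := ⟨β, hβS⟩
  set γ : ℝ := sInf S with hγdef
  have hγS : γ ∈ S := hScomp.sInf_mem hSne
  have hwγ : w γ = 0 := hγS.1
  have huγ : u < γ := lt_of_le_of_ne hγS.2.1 (fun h => by
    rw [← h] at hwγ; exact absurd hwγ (ne_of_gt huself.1))
  have hαγ : α < γ := lt_trans hu huγ
  have hγβ : γ ≤ β := hγS.2.2
  -- w > 0 on Ioo α γ
  have hposIoo : ∀ t, t ∈ Ioo α γ → 0 < w t := by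
    intro t ht
    rcases le_or_gt t u with h | h
    · exact (hwu t ⟨ht.1, h⟩).1
    · by_contra hle
      push_neg at hle
      have hsub2 : (0 : ℝ) ∈ Icc (w t) (w u) := ⟨hle, huself.1.le⟩
      have := intermediate_value_Icc' h.le hwcont.continuousOn hsub2
      obtain ⟨z, hz, hz0⟩ := this
      have hzS : z ∈ S := ⟨hz0, ⟨hz.1, le_trans hz.2 (le_trans ht.2.le hγβ)⟩⟩
      have := csInf_le hScomp.bddBelow hzS
      have : γ ≤ t := le_trans this hz.2
      exact absurd ht.2 (not_lt.mpr this)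
  -- deriv w γ < 0
  have hdγ : HasDerivAt w (deriv w γ) γ := (hw1 γ).hasDerivAt
  have hsγ : Tendsto (slope w γ) (𝓝[<] γ) (𝓝 (deriv w γ)) :=
    (hasDerivAt_iff_tendsto_slope.mp hdγ).mono_left
      (nhdsWithin_mono γ (fun t ht => ne_of_lt ht))
  have hev : ∀ᶠ t in 𝓝[<] γ, slope w γ t ≤ 0 := by
    have hα' : ∀ᶠ t in 𝓝[<] γ, α < t :=
      (eventually_gt_nhds hαγ).filter_mono nhdsWithin_le_nhds
    filter_upwards [hα', self_mem_nhdsWithin] with t htα htγ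
    have hwt : 0 < w t := hposIoo t ⟨htα, htγ⟩
    rw [slope_def_field, hwγ, sub_zero]
    apply le_of_lt
    exact div_neg_of_pos_of_neg hwt (sub_neg.mpr htγ)
  have hderivγ : deriv w γ ≤ 0 := le_of_tendsto hsγ hev
  have hderivγlt : deriv w γ < 0 := lt_of_le_of_ne hderivγ (huniq γ hwγ)
  -- Wronskian with v(t) = sin(m(t-α))
  set W : ℝ → ℝ := fun t => w t * (Real.cos (m * (t - α)) * m) -
    deriv w t * Real.sin (m * (t - α)) with hWdef
  have hWd : ∀ t, HasDerivAt W (-((M + q t) * (w t * Real.sin (m * (t - α))))) t := by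
    intro t
    have hinner : HasDerivAt (fun s => m * (s - α)) m t := by
      simpa using ((hasDerivAt_id t).sub_const α).const_mul m
    have hsin : HasDerivAt (fun s => Real.sin (m * (s - α)))
        (Real.cos (m * (t - α)) * m) t := (Real.hasDerivAt_sin _).comp t hinner
    have hcos : HasDerivAt (fun s => Real.cos (m * (s - α)))
        (-Real.sin (m * (t - α)) * m) t := (Real.hasDerivAt_cos _).comp t hinner
    have hw' : HasDerivAt w (deriv w t) t := (hw1 t).hasDerivAt
    have hw'' : HasDerivAt (deriv w) (q t * w t) t := by
      rw [← hode t]; exact (hw2 t).hasDerivAt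
    have := (hw'.mul (hcos.mul_const m)).sub (hw''.mul hsin)
    convert this using 1
    case e'_4 => rfl
    case e'_5 => rfl
    case e'_8 => rfl
    have : M = m ^ 2 := hmsq.symm
    rw [this]; ring
  have hWcont : Continuous W := by
    rw [continuous_iff_continuousAt]
    exact fun t => (hWd t).differentiableAt.continuousAt
  have hanti : AntitoneOn W (Icc α γ) := by
    apply antitoneOn_of_deriv_nonpos (convex_Icc α γ) hWcont.continuousOn
      (fun x _ => (hWd x).differentiableAt.differentiableWithinAt)
    intro x hx
    rw [interior_Icc] at hx
    rw [(hWd x).deriv]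
    have hA : 0 ≤ M + q x := by have := hqM x; linarith
    have hB : 0 ≤ w x := (hposIoo x hx).le
    have hC : 0 ≤ Real.sin (m * (x - α)) := by
      apply Real.sin_nonneg_of_nonneg_of_le_pi
      · exact mul_nonneg hm0.le (by linarith [hx.1])
      · exact (hlt x (le_trans hx.2.le hγβ)).le
    nlinarith [mul_nonneg (mul_nonneg hA hB) hC]
  have hWα : W α = 0 := by simp [hWdef, hwα]
  have hWγ : 0 < W γ := by
    have hsinγ : 0 < Real.sin (m * (γ - α)) :=
      Real.sin_pos_of_pos_of_lt_pi (mul_pos hm0 (sub_pos.mpr hαγ)) (hlt γ hγβ)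
    have : W γ = -(deriv w γ) * Real.sin (m * (γ - α)) := by
      simp [hWdef, hwγ]
    rw [this]
    exact mul_pos (by linarith) hsinγ
  have := hanti (left_mem_Icc.mpr hαγ.le) (right_mem_Icc.mpr hαγ.le) hαγ.le
  rw [hWα] at this
  linarith

/-- If a nontrivial solution of `w'' = q w` (with `q` continuous and `τ`-periodic)
has two zeros `α < β`, then the negative part of `q` is not identically zero, and
`β - α ≥ π * (max_{[0,τ]} q⁻)^(-1/2)`. -/
theorem hill_zeros_spacing (q w : ℝ → ℝ) (τ α β : ℝ) (hτ : 0 < τ)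
    (hq_cont : Continuous q) (hq_per : ∀ t, q (t + τ) = q t)
    (hw : ContDiff ℝ 2 w) (hw_ne : w ≠ 0)
    (hode : ∀ t, deriv (deriv w) t = q t * w t)
    (hαβ : α < β) (hwα : w α = 0) (hwβ : w β = 0) :
    (∃ t, 0 < max (-q t) 0) ∧
      β - α ≥ Real.pi * (sSup ((fun t => max (-q t) 0) '' Set.Icc (0:ℝ) τ)) ^ (-(1/2) : ℝ) := by
  have hw1 : Differentiable ℝ w := hw.differentiable (by norm_num)
  have hw2 : Differentiable ℝ (deriv w) := by
    have h : ContDiff ℝ ((1 : ℕ) + 1) w := by exact_mod_cast hw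
    exact (contDiff_succ_iff_deriv.mp h).2.2.differentiable (by norm_num)
  -- global bound on |q| from periodicity
  have hperq : Function.Periodic q τ := hq_per
  obtain ⟨C, hC⟩ := isCompact_Icc.exists_bound_of_continuousOn
    (s := Icc (0:ℝ) τ) hq_cont.continuousOn
  have hqb : ∀ t, |q t| ≤ C := by
    intro t
    obtain ⟨y, hy, hqy⟩ := hperq.exists_mem_Ico₀ hτ t
    rw [hqy]
    exact hC y (Ico_subset_Icc_self hy)
  have huniq0 : ∀ t₀, w t₀ = 0 → deriv w t₀ = 0 → False := fun t₀ h0 h1 =>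
    hw_ne (funext (hill_uniq q w C hqb hw1 hw2 hode t₀ h0 h1))
  -- Part A
  have partA : ∃ t, 0 < max (-q t) 0 := by
    by_contra hcon
    push_neg at hcon
    have hq0 : ∀ t, 0 ≤ q t := fun t => by
      have := (max_le_iff.mp (hcon t)).1; linarith
    have hg : ∀ t, HasDerivAt (fun t => w t * deriv w t)
        (deriv w t * deriv w t + w t * (q t * w t)) t := by
      intro t
      have hb : HasDerivAt (deriv w) (q t * w t) t := by
        rw [← hode t]; exact (hw2 t).hasDerivAt
      exact (hw1 t).hasDerivAt.mul hb
    have hmono : Monotone (fun t => w t * deriv w t) := by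
      apply monotone_of_deriv_nonneg
      · exact fun t => ((hg t).differentiableAt)
      · intro x
        rw [(hg x).deriv]
        have h1 : 0 ≤ deriv w x * deriv w x := mul_self_nonneg _
        have h2 : 0 ≤ w x * (q x * w x) := by nlinarith [mul_self_nonneg (w x), hq0 x]
        linarith
    have hgzero : ∀ t ∈ Icc α β, w t * deriv w t = 0 := by
      intro t ht
      have h1 := hmono ht.1
      have h2 := hmono ht.2
      simp only [hwα, hwβ, zero_mul] at h1 h2
      linarith
    have hconst := constant_of_has_deriv_right_zero (f := fun t => w t * w t) (a := α) (b := β)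
      (hw1.continuous.mul hw1.continuous).continuousOn (fun y hy => by
        have h := ((hw1 y).hasDerivAt.mul (hw1 y).hasDerivAt).hasDerivWithinAt (s := Ici y)
        have hz := hgzero y (Ico_subset_Icc_self hy)
        have heq : deriv w y * w y + w y * deriv w y = 0 := by
          have : deriv w y * w y = w y * deriv w y := mul_comm _ _
          linarith
        rwa [heq] at h)
    have hwzero : ∀ t ∈ Icc α β, w t = 0 := by
      intro t ht
      have h2 : w t * w t = w α * w α := hconst t ht
      rw [hwα, mul_zero] at h2
      exact mul_self_eq_zero.mp h2
    set t₁ : ℝ := (α + β) / 2 with ht₁def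
    have ht₁ : t₁ ∈ Ioo α β := ⟨by simp only [ht₁def]; linarith, by simp only [ht₁def]; linarith⟩
    have hev : w =ᶠ[𝓝 t₁] (fun _ => (0:ℝ)) := by
      filter_upwards [Ioo_mem_nhds ht₁.1 ht₁.2] with s hs
      exact hwzero s ⟨hs.1.le, hs.2.le⟩
    have hd0 : deriv w t₁ = 0 := by
      rw [hev.deriv_eq]; simp
    exact huniq0 t₁ (hwzero t₁ ⟨ht₁.1.le, ht₁.2.le⟩) hd0
  refine ⟨partA, ?_⟩
  -- Part B
  set F : ℝ → ℝ := fun t => max (-q t) 0 with hFdef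
  set M : ℝ := sSup (F '' Icc (0:ℝ) τ) with hMdef
  have hFcont : Continuous F := hq_cont.neg.max continuous_const
  have himg : IsCompact (F '' Icc (0:ℝ) τ) := isCompact_Icc.image hFcont
  have hne : (F '' Icc (0:ℝ) τ).Nonempty := (nonempty_Icc.mpr hτ.le).image F
  have hperF : Function.Periodic F τ := fun t => by simp [hFdef, hq_per]
  have hle : ∀ t, F t ≤ M := by
    intro t
    obtain ⟨y, hy, hFy⟩ := hperF.exists_mem_Ico₀ hτ t
    rw [hFy]
    exact le_csSup himg.bddAbove ⟨y, Ico_subset_Icc_self hy, rfl⟩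
  have hMpos : 0 < M := by
    obtain ⟨t, ht⟩ := partA
    exact lt_of_lt_of_le ht (hle t)
  have hqM : ∀ t, -M ≤ q t := by
    intro t
    have h1 := hle t
    have h2 : -q t ≤ F t := le_max_left _ _
    linarith
  have hrw : M ^ (-(1/2) : ℝ) = (Real.sqrt M)⁻¹ := by
    rw [Real.rpow_neg hMpos.le, ← Real.sqrt_eq_rpow]
  rw [ge_iff_le, hrw]
  by_contra hcon
  push_neg at hcon
  have hcon' : β - α < Real.pi / Real.sqrt M := by rwa [div_eq_mul_inv]
  rcases lt_trichotomy (deriv w α) 0 with hneg | hzero | hposd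
  · -- apply Sturm lemma to -w
    have hdw2 : deriv (fun t => -w t) = fun t => -(deriv w t) := funext fun t => deriv.neg
    have hw2' : Differentiable ℝ (deriv (fun t => -w t)) := by rw [hdw2]; exact hw2.neg
    have hode' : ∀ t, deriv (deriv (fun t => -w t)) t = q t * (fun t => -w t) t := by
      intro t
      rw [hdw2]
      simp only [deriv.fun_neg, hode t]
      ring
    have huniq' : ∀ t₀, (fun t => -w t) t₀ = 0 → deriv (fun t => -w t) t₀ ≠ 0 := by
      intro t₀ h0 h1
      rw [hdw2] at h1
      exact huniq0 t₀ (neg_eq_zero.mp h0) (neg_eq_zero.mp h1)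
    have hpos' : 0 < deriv (fun t => -w t) α := by
      rw [hdw2]; simpa using hneg
    exact hill_sturm q (fun t => -w t) M α β hMpos hqM hw1.neg hw2' hode' huniq'
      hαβ (by simp [hwα]) (by simp [hwβ]) hcon' hpos'
  · exact huniq0 α hwα hzero
  · exact hill_sturm q w M α β hMpos hqM hw1 hw2 hode
      (fun t₀ h0 h1 => huniq0 t₀ h0 h1) hαβ hwα hwβ hcon' hposd
end

section
/- Fix a ∈ (-1,0) ∪ (0,∞) and set γ = a(1+a). Let (x,z) solve x'' = (1+2γ)x − 2x³, z' = x² − γ with x(0) = 1+a, x'(0) = 0, z(0) = 0. Then for all t, x(t)² = x'(t)² + z'(t)², i.e. x(t) = sqrt(x'(t)² + z'(t)²) since x > 0. -/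
open Real

/-- The isothermal parametrization identity `x² = (x')² + (z')²` for Delaunay
roulettes. -/
theorem delaunay_isothermal (a γ : ℝ) (x z : ℝ → ℝ)
    (ha : a ∈ Set.Ioo (-1 : ℝ) 0 ∪ Set.Ioi (0 : ℝ)) (hγ : γ = a * (1 + a))
    (hx : ContDiff ℝ 2 x) (hxpos : ∀ t, 0 < x t)
    (hode : ∀ t, deriv (deriv x) t = (1 + 2 * γ) * x t - 2 * (x t) ^ 3)
    (hx0 : x 0 = 1 + a) (hx'0 : deriv x 0 = 0)
    (hz : ∀ t, deriv z t = (x t) ^ 2 - γ) (hz0 : z 0 = 0) :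
    ∀ t, (x t) ^ 2 = (deriv x t) ^ 2 + (deriv z t) ^ 2 ∧
      x t = Real.sqrt ((deriv x t) ^ 2 + (deriv z t) ^ 2) := by
  have hxd : Differentiable ℝ x := hx.differentiable two_ne_zero
  have hxd2 : Differentiable ℝ (deriv x) := by
    have h2 : ContDiff ℝ ((1 : ℕ) + 1) x := by
      exact hx.of_le (by norm_num)
    exact (contDiff_succ_iff_deriv.mp h2).2.2.differentiable one_ne_zero
  set E : ℝ → ℝ := fun t =>
    (deriv x t) ^ 2 - (1 + 2 * γ) * (x t) ^ 2 + (x t) ^ 4 + γ ^ 2 with hEdef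
  have hE : ∀ t, HasDerivAt E 0 t := by
    intro t
    have h1 : HasDerivAt x (deriv x t) t := (hxd t).hasDerivAt
    have h2 : HasDerivAt (deriv x) (deriv (deriv x) t) t := (hxd2 t).hasDerivAt
    have h3 := (((h2.pow 2).sub ((h1.pow 2).const_mul (1 + 2 * γ))).add
      (h1.pow 4)).add_const (γ ^ 2)
    convert h3 using 1
    · rfl
    · rfl
    · rfl
    · rw [hode t]; ring
  have hEconst : ∀ t, E t = E 0 := fun t =>
    is_const_of_deriv_eq_zero (fun s => (hE s).differentiableAt)
      (fun s => (hE s).deriv) t 0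
  have hE0 : E 0 = 0 := by
    simp only [hEdef, hx'0, hx0, hγ]; ring
  intro t
  have key : (x t) ^ 2 = (deriv x t) ^ 2 + (deriv z t) ^ 2 := by
    have h := hEconst t
    rw [hE0] at h
    simp only [hEdef] at h
    rw [hz t]
    nlinarith [h]
  exact ⟨key, by rw [← key, Real.sqrt_sq (hxpos t).le]⟩
end

section
/- Fix a ∈ (-1,0) ∪ (0,∞), γ = a(1+a), and let x = x_a be the Delaunay profile solving x'' = (1+2γ)x − 2x³ with x(0) = 1+a, x'(0) = 0. Define p(t) = x(t)² + γ²/x(t)². Then p satisfies the ODE p'' = 2[2(1+2γ)p − 3p² + 4γ²]. -/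
open Real

/-- The potential `p = x² + γ²/x²` of the Jacobi operator of a Delaunay surface
satisfies `p'' = 2[2(1+2γ)p − 3p² + 4γ²]`. -/
theorem delaunay_potential_ode (a γ : ℝ) (x : ℝ → ℝ)
    (ha : a ∈ Set.Ioo (-1 : ℝ) 0 ∪ Set.Ioi (0 : ℝ)) (hγ : γ = a * (1 + a))
    (hx : ContDiff ℝ 2 x) (hxpos : ∀ t, 0 < x t)
    (hode : ∀ t, deriv (deriv x) t = (1 + 2 * γ) * x t - 2 * (x t) ^ 3)
    (hx0 : x 0 = 1 + a) (hx'0 : deriv x 0 = 0) :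
    ∀ t, deriv (deriv (fun s => (x s) ^ 2 + γ ^ 2 / (x s) ^ 2)) t
      = 2 * (2 * (1 + 2 * γ) * ((x t) ^ 2 + γ ^ 2 / (x t) ^ 2)
          - 3 * ((x t) ^ 2 + γ ^ 2 / (x t) ^ 2) ^ 2 + 4 * γ ^ 2) := by
  have hxd : Differentiable ℝ x := hx.differentiable (by norm_num)
  have hx1 : ContDiff ℝ 1 (deriv x) := by
    have := (contDiff_succ_iff_deriv (n := 1)).mp (by exact_mod_cast hx)
    exact this.2.2
  have hxd' : Differentiable ℝ (deriv x) := hx1.differentiable (by norm_num)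
  have hdx : ∀ t, HasDerivAt x (deriv x t) t := fun t => (hxd t).hasDerivAt
  have hdx' : ∀ t, HasDerivAt (deriv x) ((1 + 2 * γ) * x t - 2 * (x t) ^ 3) t := by
    intro t
    have := (hxd' t).hasDerivAt
    rwa [hode t] at this
  -- energy identity
  have energy : ∀ t, (deriv x t) ^ 2 = (1 + 2 * γ) * (x t) ^ 2 - (x t) ^ 4 - γ ^ 2 := by
    set E : ℝ → ℝ := fun t => (deriv x t) ^ 2 - (1 + 2 * γ) * (x t) ^ 2 + (x t) ^ 4 with hE
    have hEd : ∀ t, HasDerivAt E 0 t := by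
      intro t
      have h1 := ((hdx' t).fun_pow 2).fun_sub (((hdx t).fun_pow 2).const_mul (1 + 2 * γ))
      have h2 := h1.fun_add ((hdx t).fun_pow 4)
      exact h2.congr_deriv (by ring)
    have hconst : ∀ t, E t = E 0 := fun t =>
      is_const_of_deriv_eq_zero (fun s => (hEd s).differentiableAt)
        (fun s => (hEd s).deriv) t 0
    intro t
    have ht := hconst t
    simp only [hE] at ht
    rw [hx'0, hx0] at ht
    have h0 : (0:ℝ) ^ 2 - (1 + 2 * γ) * (1 + a) ^ 2 + (1 + a) ^ 4 = -γ ^ 2 := by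
      rw [hγ]; ring
    linarith [ht, h0]
  intro t
  have hxne : ∀ s, x s ≠ 0 := fun s => (hxpos s).ne'
  -- first derivative of p
  set p : ℝ → ℝ := fun s => (x s) ^ 2 + γ ^ 2 / (x s) ^ 2 with hp
  set q : ℝ → ℝ := fun s => 2 * x s * deriv x s - 2 * γ ^ 2 * deriv x s / (x s) ^ 3 with hq
  have hdp : ∀ s, HasDerivAt p (q s) s := by
    intro s
    have hx2 : HasDerivAt (fun u => (x u) ^ 2) (2 * x s * deriv x s) s := by
      have := (hdx s).fun_pow 2
      exact this.congr_deriv (by ring)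
    have hx2ne : (x s) ^ 2 ≠ 0 := pow_ne_zero _ (hxne s)
    have hdiv : HasDerivAt (fun u => γ ^ 2 / (x u) ^ 2)
        ((0 * (x s) ^ 2 - γ ^ 2 * (2 * x s * deriv x s)) / ((x s) ^ 2) ^ 2) s :=
      (hasDerivAt_const s (γ ^ 2)).div hx2 hx2ne
    have := hx2.fun_add hdiv
    refine this.congr_deriv ?_
    simp only [hq]
    have h := hxne s
    field_simp
    ring
  have hderivp : deriv p = q := funext fun s => (hdp s).deriv
  -- second derivative
  have hdq : HasDerivAt q
      (2 * (deriv x t) ^ 2 + 2 * x t * ((1 + 2 * γ) * x t - 2 * (x t) ^ 3)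
        - 2 * γ ^ 2 * ((1 + 2 * γ) * x t - 2 * (x t) ^ 3) / (x t) ^ 3
        + 6 * γ ^ 2 * (deriv x t) ^ 2 / (x t) ^ 4) t := by
    have h1 : HasDerivAt (fun s => 2 * x s * deriv x s)
        (2 * (deriv x t) ^ 2 + 2 * x t * ((1 + 2 * γ) * x t - 2 * (x t) ^ 3)) t := by
      have := ((hdx t).const_mul 2).fun_mul (hdx' t)
      exact this.congr_deriv (by ring)
    have hx3ne : (x t) ^ 3 ≠ 0 := pow_ne_zero _ (hxne t)
    have hnum : HasDerivAt (fun s => 2 * γ ^ 2 * deriv x s)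
        (2 * γ ^ 2 * ((1 + 2 * γ) * x t - 2 * (x t) ^ 3)) t := (hdx' t).const_mul _
    have hden : HasDerivAt (fun s => (x s) ^ 3) (3 * (x t) ^ 2 * deriv x t) t := by
      simpa using (hdx t).fun_pow 3
    have h2 := hnum.fun_div hden hx3ne
    have h3 := h1.fun_sub h2
    refine h3.congr_deriv ?_
    have h := hxne t
    field_simp
    ring
  have key : deriv (deriv p) t = 2 * (deriv x t) ^ 2
        + 2 * x t * ((1 + 2 * γ) * x t - 2 * (x t) ^ 3)
        - 2 * γ ^ 2 * ((1 + 2 * γ) * x t - 2 * (x t) ^ 3) / (x t) ^ 3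
        + 6 * γ ^ 2 * (deriv x t) ^ 2 / (x t) ^ 4 := by
    rw [hderivp]
    exact hdq.deriv
  rw [show deriv (deriv (fun s => (x s) ^ 2 + γ ^ 2 / (x s) ^ 2)) t = deriv (deriv p) t from rfl, key, energy t]
  have h := hxne t
  field_simp
  ring
end

section
/- Fix a > 0 and let w_{a,1}(t) = z_a'(t)/x_a(t), where (x_a, z_a) is the Delaunay roulette (nodary case) with period 2τ_a for x_a. Then the zero set of w_{a,1} on (0,∞) is exactly {(k + 1/2)·τ_a : k ∈ ℕ}. -/
open Set

lemma nodary_lipF (c B : ℝ) (hc : 0 ≤ c) (hB : 0 ≤ B) :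
    LipschitzOnWith (Real.toNNReal (c + 6*B^2 + 1))
      (fun p : ℝ × ℝ => (p.2, c * p.1 - 2 * p.1 ^ 3)) {p : ℝ × ℝ | |p.1| ≤ B} := by
  rw [lipschitzOnWith_iff_dist_le_mul]
  intro p hp q hq
  have h1 : |p.1| ≤ B := hp
  have h2 : |q.1| ≤ B := hq
  have hK : (Real.toNNReal (c + 6*B^2 + 1) : ℝ) = c + 6*B^2 + 1 :=
    Real.coe_toNNReal _ (by positivity)
  rw [Prod.dist_eq, Prod.dist_eq, hK]
  have hd1 : dist p.1 q.1 ≤ max (dist p.1 q.1) (dist p.2 q.2) := le_max_left _ _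
  have hd2 : dist p.2 q.2 ≤ max (dist p.1 q.1) (dist p.2 q.2) := le_max_right _ _
  apply max_le
  · nlinarith [dist_nonneg (x := p.1) (y := q.1), dist_nonneg (x := p.2) (y := q.2)]
  · have key : dist (c * p.1 - 2 * p.1 ^ 3) (c * q.1 - 2 * q.1 ^ 3)
        ≤ (c + 6*B^2) * dist p.1 q.1 := by
      rw [Real.dist_eq, Real.dist_eq]
      have : c * p.1 - 2 * p.1 ^ 3 - (c * q.1 - 2 * q.1 ^ 3)
          = (p.1 - q.1) * (c - 2 * (p.1^2 + p.1 * q.1 + q.1^2)) := by ring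
      rw [this, abs_mul]
      have hb : |c - 2 * (p.1^2 + p.1 * q.1 + q.1^2)| ≤ c + 6*B^2 := by
        rw [abs_le]
        have e1 : p.1^2 ≤ B^2 := by nlinarith [sq_abs p.1, mul_le_mul h1 h1 (abs_nonneg _) hB]
        have e2 : q.1^2 ≤ B^2 := by nlinarith [sq_abs q.1, mul_le_mul h2 h2 (abs_nonneg _) hB]
        have e3 : p.1 * q.1 ≤ B^2 := by
          nlinarith [le_abs_self (p.1 * q.1), abs_mul p.1 q.1,
            mul_le_mul h1 h2 (abs_nonneg _) hB]
        constructor <;> nlinarith [sq_nonneg (p.1 + q.1)]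
      calc |p.1 - q.1| * |c - 2 * (p.1^2 + p.1 * q.1 + q.1^2)|
          ≤ |p.1 - q.1| * (c + 6*B^2) := by
            apply mul_le_mul_of_nonneg_left hb (abs_nonneg _)
        _ = (c + 6*B^2) * dist p.1 q.1 := by rw [Real.dist_eq]; ring
    nlinarith [dist_nonneg (x := p.1) (y := q.1), dist_nonneg (x := p.2) (y := q.2), key]

lemma nodary_uniq {F : ℝ × ℝ → ℝ × ℝ} {s : Set (ℝ × ℝ)} {K : NNReal}
    (hF : LipschitzOnWith K F s) {f g : ℝ → ℝ × ℝ}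
    (hf : ∀ t, HasDerivAt f (F (f t)) t) (hfs : ∀ t, f t ∈ s)
    (hg : ∀ t, HasDerivAt g (F (g t)) t) (hgs : ∀ t, g t ∈ s)
    {t₀ : ℝ} (heq : f t₀ = g t₀) : ∀ t, f t = g t := by
  intro t
  have h1 : min t t₀ - 1 < t₀ := lt_of_le_of_lt (by simp) (by linarith : t₀ - 1 < t₀)
  have h2 : t₀ < max t t₀ + 1 := lt_of_le_of_lt (le_max_right t t₀) (by linarith)
  have h3 : min t t₀ - 1 < t := lt_of_le_of_lt (by simp) (by linarith : t - 1 < t)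
  have h4 : t < max t t₀ + 1 := lt_of_le_of_lt (le_max_left t t₀) (by linarith)
  exact ODE_solution_unique_of_mem_Ioo (v := fun _ => F) (s := fun _ => s)
    (fun _ _ => hF) (t₀ := t₀) ⟨h1, h2⟩
    (fun u _ => ⟨hf u, hfs u⟩) (fun u _ => ⟨hg u, hgs u⟩) heq ⟨h3, h4⟩



open Real

set_option maxHeartbeats 2000000 in
/-- For the nodary case `a > 0`, the zero set of `w_{a,1} = z_a'/x_a` on `(0,∞)`
is exactly `{(k + 1/2)·τ_a : k ∈ ℕ}`, where `2τ_a` is the fundamental period of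
`x_a`. -/
theorem nodary_wa1_zero_set (a γ τ : ℝ) (x z : ℝ → ℝ)
    (ha : 0 < a) (hγ : γ = a * (1 + a))
    (hx : ContDiff ℝ 2 x) (hxpos : ∀ t, 0 < x t)
    (hode : ∀ t, deriv (deriv x) t = (1 + 2 * γ) * x t - 2 * (x t) ^ 3)
    (hx0 : x 0 = 1 + a) (hx'0 : deriv x 0 = 0)
    (hz : ∀ t, deriv z t = (x t) ^ 2 - γ) (hz0 : z 0 = 0)
    (hτ : 0 < τ) (hper : Function.Periodic x (2 * τ))
    (hτmin : ∀ p, 0 < p → Function.Periodic x p → 2 * τ ≤ p) :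
    ∀ t, 0 < t → (deriv z t / x t = 0 ↔ ∃ k : ℕ, t = ((k : ℝ) + 1 / 2) * τ) := by
  -- basic differentiability
  have hx2 : ContDiff ℝ (1 + 1) x := by exact_mod_cast hx
  have hd1 : Differentiable ℝ x := hx2.differentiable (by norm_num)
  have hd2 : Differentiable ℝ (deriv x) :=
    (contDiff_succ_iff_deriv.mp hx2).2.2.differentiable (by norm_num)
  have hX : ∀ t, HasDerivAt x (deriv x t) t := fun t => (hd1 t).hasDerivAt
  have hV : ∀ t, HasDerivAt (deriv x) ((1 + 2 * γ) * x t - 2 * (x t) ^ 3) t := by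
    intro t
    have := (hd2 t).hasDerivAt
    rwa [hode t] at this
  -- energy identity
  have hE : ∀ t, (deriv x t)^2 = -(x t)^4 + (1 + 2*γ) * (x t)^2 - γ^2 := by
    have hconst : ∀ t s : ℝ,
        (deriv x t)^2 + (x t)^4 - (1+2*γ)*(x t)^2
        = (deriv x s)^2 + (x s)^4 - (1+2*γ)*(x s)^2 := by
      have hdiff : ∀ t, HasDerivAt
          (fun u => (deriv x u)^2 + (x u)^4 - (1+2*γ)*(x u)^2) 0 t := by
        intro t
        have h1 := ((hV t).pow 2)
        have h2 := ((hX t).pow 4)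
        have h3 := ((hX t).pow 2).const_mul (1+2*γ)
        have := (h1.add h2).sub h3
        exact this.congr_deriv (by ring)
      intro t s
      exact is_const_of_deriv_eq_zero (fun u => (hdiff u).differentiableAt)
        (fun u => (hdiff u).deriv) t s
    intro t
    have := hconst t 0
    rw [hx0, hx'0, hγ] at this
    nlinarith [this]
  -- bounds
  have hfact : ∀ t, (deriv x t)^2 = ((x t)^2 - a^2) * ((1+a)^2 - (x t)^2) := by
    intro t; rw [hE t, hγ]; ring
  have hub : ∀ t, x t ≤ 1 + a := by
    intro t
    by_contra hcon
    push_neg at hcon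
    have h1 : 0 < (x t)^2 - (1+a)^2 := by nlinarith [hxpos t]
    have h2 : 0 < (x t)^2 - a^2 := by nlinarith [hxpos t]
    nlinarith [hfact t, sq_nonneg (deriv x t), mul_pos h2 h1]
  have hlb : ∀ t, a ≤ x t := by
    intro t
    by_contra hcon
    push_neg at hcon
    have h1 : 0 < a^2 - (x t)^2 := by nlinarith [hxpos t]
    have h2 : 0 < (1+a)^2 - (x t)^2 := by nlinarith [hxpos t]
    nlinarith [hfact t, sq_nonneg (deriv x t), mul_pos h1 h2]
  -- determination by initial data
  have habs : ∀ t, |x t| ≤ 1 + a := fun t => abs_le.2 ⟨by nlinarith [hlb t], hub t⟩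
  have hγpos : 0 < γ := by rw [hγ]; positivity
  have hFlip := nodary_lipF (1+2*γ) (1+a) (by linarith) (by linarith)
  have hdet : ∀ (g g' : ℝ → ℝ), (∀ t, HasDerivAt g (g' t) t) →
      (∀ t, HasDerivAt g' ((1+2*γ) * g t - 2 * (g t)^3) t) →
      (∀ t, |g t| ≤ 1 + a) → ∀ t₀, g t₀ = x t₀ → g' t₀ = deriv x t₀ → ∀ t, g t = x t := by
    intro g g' hg hg' hgb t₀ h0 h0'
    have main := nodary_uniq hFlip (f := fun t => (g t, g' t))
      (g := fun t => (x t, deriv x t))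
      (fun t => (hg t).prodMk (hg' t)) (fun t => hgb t)
      (fun t => (hX t).prodMk (hV t)) (fun t => habs t)
      (t₀ := t₀) (by rw [Prod.mk.injEq]; exact ⟨h0, h0'⟩)
    intro t; exact congrArg Prod.fst (main t)
  -- evenness
  have heven : ∀ t, x (-t) = x t := by
    have hg : ∀ t, HasDerivAt (fun s => x (-s)) (-(deriv x (-t))) t := by
      intro t
      have := (hX (-t)).comp t (hasDerivAt_neg t)
      exact this.congr_deriv (by ring)
    have hg' : ∀ t, HasDerivAt (fun s => -(deriv x (-s)))
        ((1+2*γ) * x (-t) - 2 * (x (-t))^3) t := by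
      intro t
      have := ((hV (-t)).comp t (hasDerivAt_neg t)).neg
      exact this.congr_deriv (by ring)
    exact hdet _ _ hg hg' (fun t => habs (-t)) 0
      (by rw [neg_zero]) (by rw [neg_zero, hx'0, neg_zero])
  -- no critical points in (0, τ)
  have hcrit : ∀ t₁, 0 < t₁ → t₁ < τ → deriv x t₁ ≠ 0 := by
    intro t₁ h0 h1 hzero
    have hg : ∀ t, HasDerivAt (fun s => x (2*t₁ - s)) (-(deriv x (2*t₁ - t))) t := by
      intro t
      have := (hX (2*t₁ - t)).comp t ((hasDerivAt_id t).const_sub (2*t₁))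
      exact this.congr_deriv (by ring)
    have hg' : ∀ t, HasDerivAt (fun s => -(deriv x (2*t₁ - s)))
        ((1+2*γ) * x (2*t₁ - t) - 2 * (x (2*t₁ - t))^3) t := by
      intro t
      have := ((hV (2*t₁ - t)).comp t ((hasDerivAt_id t).const_sub (2*t₁))).neg
      exact this.congr_deriv (by ring)
    have hrefl : ∀ t, x (2*t₁ - t) = x t := by
      apply hdet _ _ hg hg' (fun t => habs _) t₁
      · rw [show 2*t₁ - t₁ = t₁ by ring]
      · rw [show 2*t₁ - t₁ = t₁ by ring, hzero, neg_zero]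
    have hper2 : Function.Periodic x (2*t₁) := by
      intro s
      rw [show s + 2*t₁ = 2*t₁ - (-s) by ring, hrefl (-s), heven]
    have := hτmin (2*t₁) (by linarith) hper2
    linarith
  -- derivative vanishes at τ
  have hsym2τ : ∀ t, x (2*τ - t) = x t := by
    intro t
    rw [show 2*τ - t = -t + 2*τ by ring, hper (-t), heven]
  have hdτ : deriv x τ = 0 := by
    have hD : HasDerivAt (fun s => x (2*τ - s)) (deriv x (2*τ - τ) * (-1)) τ :=
      (hX (2*τ - τ)).comp τ ((hasDerivAt_id τ).const_sub (2*τ))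
    rw [funext hsym2τ, show 2*τ - τ = τ by ring] at hD
    have := hD.unique (hX τ)
    linarith
  -- x is strictly decreasing on [0, τ]
  have hsign : ∀ t, t ∈ Ioo 0 τ → deriv x t < 0 := by
    intro t ht
    rcases lt_or_gt_of_ne (hcrit t ht.1 ht.2) with h | h
    · exact h
    · exfalso
      have hpos : ∀ u, u ∈ Ioo 0 τ → 0 < deriv x u := by
        intro u hu
        rcases lt_or_gt_of_ne (hcrit u hu.1 hu.2) with h' | h'
        · exfalso
          rcases lt_trichotomy u t with hut | hut | hut
          · obtain ⟨c, hc, hc0⟩ := intermediate_value_Ioo (le_of_lt hut)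
              (hd2.continuous.continuousOn)
              (show (0:ℝ) ∈ Ioo (deriv x u) (deriv x t) from ⟨h', h⟩)
            exact hcrit c (lt_trans hu.1 hc.1) (lt_trans hc.2 ht.2) hc0
          · rw [hut] at h'; linarith
          · obtain ⟨c, hc, hc0⟩ := intermediate_value_Ioo' (le_of_lt hut)
              (hd2.continuous.continuousOn)
              (show (0:ℝ) ∈ Ioo (deriv x u) (deriv x t) from ⟨h', h⟩)
            exact hcrit c (lt_trans ht.1 hc.1) (lt_trans hc.2 hu.2) hc0
        · exact h'
      have hmono : StrictMonoOn x (Icc 0 τ) :=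
        strictMonoOn_of_deriv_pos (convex_Icc 0 τ) (hd1.continuous.continuousOn)
          (fun u hu => hpos u (by rwa [interior_Icc] at hu))
      have := hmono ⟨le_refl 0, le_of_lt hτ⟩ ⟨le_of_lt hτ, le_refl τ⟩ hτ
      rw [hx0] at this
      linarith [hub τ]
  have hanti : StrictAntiOn x (Icc 0 τ) :=
    strictAntiOn_of_deriv_neg (convex_Icc 0 τ) (hd1.continuous.continuousOn)
      (fun u hu => hsign u (by rwa [interior_Icc] at hu))
  -- x τ = a
  have hxτ : x τ = a := by
    have h0 := hfact τ
    rw [hdτ] at h0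
    have hlt : x τ < 1 + a := by
      have := hanti ⟨le_refl 0, le_of_lt hτ⟩ ⟨le_of_lt hτ, le_refl τ⟩ hτ
      rwa [hx0] at this
    have hu : (x τ)^2 < (1+a)^2 := by nlinarith [hxpos τ]
    have h1 : (x τ)^2 = a^2 :=
      le_antisymm (by nlinarith [hu]) (by nlinarith [hlb τ, ha])
    have := hxpos τ
    apply le_antisymm <;> nlinarith
  -- key identity x t * x (t+τ) = γ
  have hxne : ∀ t, x t ≠ 0 := fun t => ne_of_gt (hxpos t)
  have hshiftX : ∀ t, HasDerivAt (fun s => x (s + τ)) (deriv x (t+τ)) t := by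
    intro t
    have := (hX (t+τ)).comp t ((hasDerivAt_id t).add_const τ)
    exact this.congr_deriv (by ring)
  have hshiftV : ∀ t, HasDerivAt (fun s => deriv x (s + τ))
      ((1+2*γ) * x (t+τ) - 2 * (x (t+τ))^3) t := by
    intro t
    have := (hV (t+τ)).comp t ((hasDerivAt_id t).add_const τ)
    exact this.congr_deriv (by ring)
  have hkeyfun : ∀ t, γ * (x (t+τ))⁻¹ = x t := by
    apply hdet (fun s => γ * (x (s+τ))⁻¹)
      (fun s => γ * (-(deriv x (s+τ)) / (x (s+τ))^2))
    · intro t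
      exact ((hshiftX t).inv (hxne _)).const_mul γ
    · intro t
      have hnum : HasDerivAt (fun s => -(deriv x (s+τ)))
          (-((1+2*γ) * x (t+τ) - 2 * (x (t+τ))^3)) t := (hshiftV t).neg
      have hden : HasDerivAt (fun s => (x (s+τ))^2) (2 * x (t+τ) * deriv x (t+τ)) t := by
        have := (hshiftX t).pow 2
        exact this.congr_deriv (by ring)
      have hq := (hnum.div hden (pow_ne_zero 2 (hxne _))).const_mul γ
      refine hq.congr_deriv ?_
      have hEt := hE (t+τ)
      field_simp [hxne (t+τ)]
      linear_combination 2 * hEt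
    · intro t
      rw [abs_le]
      have h1 := hlb (t+τ)
      have h2 := hub (t+τ)
      have h3 := hxpos (t+τ)
      constructor
      · have : 0 < γ * (x (t+τ))⁻¹ := by positivity
        linarith
      · rw [hγ]
        rw [mul_inv_le_iff₀ h3]
        nlinarith
    · rw [zero_add, hxτ, hx0, hγ]
      field_simp
    · rw [zero_add, hdτ, hx'0]
      simp
  have hkey : ∀ t, x t * x (t+τ) = γ := by
    intro t
    have := hkeyfun t
    field_simp [hxne (t+τ)] at this
    linarith
  -- the half-period zero
  have hhalf : x (τ/2)^2 - γ = 0 := by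
    have h := hkey (-(τ/2))
    rw [show -(τ/2) + τ = τ/2 by ring, heven (τ/2)] at h
    nlinarith [h]
  -- shifting by τ preserves zeros
  have hshift0 : ∀ s, (x (s+τ)^2 - γ = 0 ↔ x s^2 - γ = 0) := by
    intro s
    have hx' : x (s+τ) = γ / x s := by
      rw [eq_div_iff (hxne s)]
      have := hkey s; linarith [hkey s]
    have hiff : x (s+τ)^2 - γ = -γ * (x s^2 - γ) / (x s)^2 := by
      rw [hx']
      field_simp [hxne s]
      ring
    rw [hiff, div_eq_zero_iff]
    constructor
    · rintro (h | h)
      · rcases mul_eq_zero.mp h with h | h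
        · exact absurd h (by simp [ne_of_gt hγpos])
        · exact h
      · exact absurd h (pow_ne_zero 2 (hxne s))
    · intro h
      left; rw [h, mul_zero]
  have hiter : ∀ (n : ℕ) (s : ℝ), (x (s + n*τ)^2 - γ = 0 ↔ x s^2 - γ = 0) := by
    intro n
    induction n with
    | zero => intro s; norm_num
    | succ n ih =>
      intro s
      rw [show s + ((n:ℕ)+1:ℕ)*τ = (s + n*τ) + τ by push_cast; ring, hshift0 (s + n*τ), ih s]
  -- uniqueness of the zero in (0, τ]
  have huniq : ∀ s, 0 < s → s ≤ τ → (x s^2 - γ = 0 ↔ s = τ/2) := by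
    intro s hs0 hsτ
    constructor
    · intro h
      have hne : x s = x (τ/2) := by
        have h2 : (x s - x (τ/2)) * (x s + x (τ/2)) = 0 := by nlinarith [hhalf]
        rcases mul_eq_zero.mp h2 with h2 | h2
        · linarith
        · linarith [hxpos s, hxpos (τ/2)]
      exact hanti.injOn ⟨le_of_lt hs0, hsτ⟩ ⟨by linarith, by linarith⟩ hne
    · intro h
      rw [h]; exact hhalf
  -- conclusion
  intro t ht
  rw [hz t]
  rw [div_eq_zero_iff]
  constructor
  · rintro (hP | hzero)
    · -- locate t in ((m-1)τ, mτ]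
      have hq : 0 < t / τ := div_pos ht hτ
      set m := ⌈t / τ⌉₊ with hm
      have hm1 : 1 ≤ m := Nat.one_le_iff_ne_zero.mpr (by
        intro h0
        rw [h0] at hm
        exact absurd (Nat.ceil_eq_zero.mp hm.symm) (not_le.mpr hq))
      have hup : t / τ ≤ (m : ℝ) := Nat.le_ceil _
      have hlow : (m : ℝ) - 1 < t / τ := by
        have := Nat.ceil_lt_add_one (le_of_lt hq)
        rw [← hm] at this
        linarith
      set s := t - ((m : ℝ) - 1) * τ with hsdef
      have hs1 : 0 < s := by
        have : ((m:ℝ) - 1) * τ < t := (lt_div_iff₀ hτ).mp hlow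
        simp only [hsdef]; linarith
      have hs2 : s ≤ τ := by
        have : t ≤ (m:ℝ) * τ := (div_le_iff₀ hτ).mp hup
        simp only [hsdef]; linarith
      have hcast : ((m - 1 : ℕ) : ℝ) = (m : ℝ) - 1 := by
        push_cast [Nat.cast_sub hm1]; ring
      have harg : s + ((m - 1 : ℕ) : ℝ) * τ = t := by rw [hcast, hsdef]; ring
      have hPs : x s ^2 - γ = 0 := (hiter (m-1) s).mp (by rw [harg]; exact hP)
      have hs : s = τ/2 := (huniq s hs1 hs2).mp hPs
      refine ⟨m - 1, ?_⟩
      rw [hcast]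
      have : t = s + ((m:ℝ) - 1) * τ := by rw [hsdef]; ring
      rw [this, hs]; ring
    · exact absurd hzero (hxne t)
  · rintro ⟨k, rfl⟩
    left
    rw [show ((k:ℝ) + 1/2) * τ = τ/2 + (k:ℝ)*τ by ring]
    exact (hiter k (τ/2)).mpr hhalf
end

section
/- Fix a ∈ (-1,0) ∪ (0,∞), γ = a(1+a), and j ∈ ℕ with j² < 4|γ|. Let w be the even solution of w'' = (j² − 2p_a)w with w(0) = (−1)^{j+1}, w'(0) = 0, where p_a = x_a² + γ²/x_a² is even and τ_a-periodic with (1/τ_a)∫₀^{τ_a} p_a ≥ 2|γ|. Then there exists T > 0 with w(T) = 0. -/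
open Real intervalIntegral

/-- If `j² < 4|γ|`, the even solution of `w'' = (j² − 2 p_a) w` with
`w(0) = (−1)^{j+1}`, `w'(0) = 0` must vanish at some `T > 0`. -/
theorem mode_j_has_zero (a γ τ : ℝ) (j : ℕ) (x w : ℝ → ℝ)
    (ha : a ∈ Set.Ioo (-1 : ℝ) 0 ∪ Set.Ioi (0 : ℝ)) (hγ : γ = a * (1 + a))
    (hj : (j : ℝ) ^ 2 < 4 * |γ|)
    (hτ : 0 < τ)
    (hx : ContDiff ℝ 2 x) (hxpos : ∀ t, 0 < x t)
    (hode : ∀ t, deriv (deriv x) t = (1 + 2 * γ) * x t - 2 * (x t) ^ 3)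
    (hx0 : x 0 = 1 + a) (hx'0 : deriv x 0 = 0)
    (hpeven : ∀ t, (x (-t)) ^ 2 + γ ^ 2 / (x (-t)) ^ 2 = (x t) ^ 2 + γ ^ 2 / (x t) ^ 2)
    (hpper : ∀ t, (x (t + τ)) ^ 2 + γ ^ 2 / (x (t + τ)) ^ 2 = (x t) ^ 2 + γ ^ 2 / (x t) ^ 2)
    (hmean : (1 / τ) * ∫ t in (0:ℝ)..τ, ((x t) ^ 2 + γ ^ 2 / (x t) ^ 2) ≥ 2 * |γ|)
    (hw : ContDiff ℝ 2 w) (hweven : ∀ t, w (-t) = w t)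
    (hwode : ∀ t, deriv (deriv w) t
      = ((j : ℝ) ^ 2 - 2 * ((x t) ^ 2 + γ ^ 2 / (x t) ^ 2)) * w t)
    (hw0 : w 0 = (-1 : ℝ) ^ (j + 1)) (hw'0 : deriv w 0 = 0) :
    ∃ T > 0, w T = 0 := by
  by_contra hcon
  push_neg at hcon
  set ε : ℝ := (-1 : ℝ) ^ (j + 1) with hε
  have hε2 : ε * ε = 1 := by rw [hε, ← mul_pow]; norm_num
  set q : ℝ → ℝ := fun t => (j : ℝ) ^ 2 - 2 * ((x t) ^ 2 + γ ^ 2 / (x t) ^ 2) with hqdef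
  -- pointwise bound q t < 0
  have hqneg : ∀ t, q t < 0 := by
    intro t
    have hu := hxpos t
    have h1 : 2 * |γ| ≤ (x t) ^ 2 + γ ^ 2 / (x t) ^ 2 := by
      have he : γ ^ 2 / (x t) ^ 2 = (|γ| / x t) ^ 2 := by rw [div_pow, sq_abs]
      have h2 := two_mul_le_add_sq (x t) (|γ| / x t)
      have h3 : x t * (|γ| / x t) = |γ| := by field_simp
      rw [he]; nlinarith
    simp only [hqdef]; nlinarith
  -- regularity
  have hxc : Continuous x := hx.continuous
  have hqc : Continuous q := by
    apply Continuous.sub continuous_const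
    exact Continuous.mul continuous_const
      ((hxc.pow 2).add (continuous_const.div (hxc.pow 2) (fun t => pow_ne_zero 2 (hxpos t).ne')))
  have hwc : Continuous w := hw.continuous
  have hw2 : ContDiff ℝ ((1:ℕ) + 1) w := by exact_mod_cast hw
  have hpair := contDiff_succ_iff_deriv.mp hw2
  have hw1 : ContDiff ℝ 1 (deriv w) := hpair.2.2
  have hdw : Differentiable ℝ w := hpair.1
  have hdw' : Differentiable ℝ (deriv w) := hw1.differentiable one_ne_zero
  have hD'eq : deriv (deriv w) = fun t => q t * w t := funext fun t => hwode t
  have hD'c : Continuous (deriv (deriv w)) := by rw [hD'eq]; exact hqc.mul hwc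
  have key : ∀ b : ℝ, ∀ a : ℝ, ∫ t in a..b, q t * w t = deriv w b - deriv w a := by
    intro b a
    rw [← hD'eq]
    exact integral_deriv_eq_sub (fun t _ => hdw' t)
      (hD'c.intervalIntegrable a b)
  have keyw : ∀ b : ℝ, ∀ a : ℝ, ∫ t in a..b, deriv w t = w b - w a := by
    intro b a
    exact integral_deriv_eq_sub (fun t _ => hdw t)
      (hw1.continuous.intervalIntegrable a b)
  have hf0 : ε * w 0 = 1 := by rw [hw0]; exact hε2
  -- positivity of ε * w on [0, ∞)
  have hfpos : ∀ t, 0 ≤ t → 0 < ε * w t := by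
    intro t ht
    rcases lt_trichotomy (ε * w t) 0 with hlt | heq | hgt
    · have hcont : ContinuousOn (fun s => ε * w s) (Set.Icc 0 t) :=
        (continuous_const.mul hwc).continuousOn
      have hsub := intermediate_value_Icc' ht hcont
      have h0mem : (0 : ℝ) ∈ Set.Icc (ε * w t) (ε * w 0) := by
        constructor <;> [linarith; (rw [hf0]; norm_num)]
      obtain ⟨s, hs, hs0⟩ := hsub h0mem
      have hs0' : ε * w s = 0 := hs0
      have hsne : s ≠ 0 := by
        intro h; rw [h, hf0] at hs0'; norm_num at hs0'
      have hws : w s = 0 := by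
        have h2 : ε * ε * w s = 0 := by rw [mul_assoc, hs0', mul_zero]
        rwa [hε2, one_mul] at h2
      exact absurd hws (hcon s (lt_of_le_of_ne hs.1 (Ne.symm hsne)))
    · have htne : t ≠ 0 := by
        intro h; rw [h, hf0] at heq; norm_num at heq
      have hws : w t = 0 := by
        calc w t = ε * ε * w t := by rw [hε2, one_mul]
        _ = ε * (ε * w t) := by ring
        _ = 0 := by rw [heq, mul_zero]
      exact absurd hws (hcon t (lt_of_le_of_ne ht (Ne.symm htne)))
    · exact hgt
  -- the slope at time 1 is negative
  have hg1 : ε * deriv w 1 < 0 := by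
    have h1 : ε * deriv w 1 = ∫ s in (0:ℝ)..1, ε * (q s * w s) := by
      rw [intervalIntegral.integral_const_mul, key 1 0, hw'0]; ring
    have h2 : (0:ℝ) < ∫ s in (0:ℝ)..1, -(ε * (q s * w s)) := by
      apply intervalIntegral.intervalIntegral_pos_of_pos_on
      · exact ((continuous_const.mul (hqc.mul hwc)).neg).intervalIntegrable 0 1
      · intro s hs
        have hfp := hfpos s (le_of_lt hs.1)
        have : ε * (q s * w s) = q s * (ε * w s) := by ring
        rw [this]
        have := mul_neg_of_neg_of_pos (hqneg s) hfp
        linarith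
      · norm_num
    rw [intervalIntegral.integral_neg] at h2
    linarith [h1, h2]
  -- slope stays below g1 for t ≥ 1
  have hstepB : ∀ t, 1 ≤ t → ε * deriv w t ≤ ε * deriv w 1 := by
    intro t ht
    have h1 : ε * deriv w t - ε * deriv w 1 = ∫ s in (1:ℝ)..t, ε * (q s * w s) := by
      rw [intervalIntegral.integral_const_mul, key t 1]; ring
    have h2 : ∫ s in (1:ℝ)..t, ε * (q s * w s) ≤ ∫ s in (1:ℝ)..t, (0:ℝ) := by
      apply intervalIntegral.integral_mono_on ht
      · exact (continuous_const.mul (hqc.mul hwc)).intervalIntegrable 1 t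
      · exact intervalIntegrable_const
      · intro s hs
        have hfp := hfpos s (by linarith [hs.1])
        have heq : ε * (q s * w s) = q s * (ε * w s) := by ring
        rw [heq]
        exact le_of_lt (mul_neg_of_neg_of_pos (hqneg s) hfp)
    rw [intervalIntegral.integral_zero] at h2
    linarith
  -- linear decay for t ≥ 1
  have hstepC : ∀ t, 1 ≤ t → ε * w t ≤ ε * w 1 + (ε * deriv w 1) * (t - 1) := by
    intro t ht
    have h1 : ε * w t - ε * w 1 = ∫ s in (1:ℝ)..t, ε * deriv w s := by
      rw [intervalIntegral.integral_const_mul, keyw t 1]; ring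
    have h2 : ∫ s in (1:ℝ)..t, ε * deriv w s ≤ ∫ s in (1:ℝ)..t, ε * deriv w 1 := by
      apply intervalIntegral.integral_mono_on ht
      · exact (continuous_const.mul hw1.continuous).intervalIntegrable 1 t
      · exact intervalIntegrable_const
      · intro s hs; exact hstepB s hs.1
    rw [intervalIntegral.integral_const, smul_eq_mul] at h2
    nlinarith
  -- contradiction at large time
  have harith : ∀ A g : ℝ, 0 < A → g < 0 → A + g * ((A + 1) / -g) ≤ -1 := by
    intro A g hA hg
    have hne : g ≠ 0 := ne_of_lt hg
    have h : g * ((A + 1) / -g) = -(A + 1) := by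
      rw [div_neg, mul_neg, mul_comm, div_mul_cancel₀ _ hne]
    linarith
  have hf1 : 0 < ε * w 1 := hfpos 1 (by norm_num)
  have hden : 0 < -(ε * deriv w 1) := by linarith
  have hTge : 1 ≤ 1 + (ε * w 1 + 1) / -(ε * deriv w 1) := by
    have : 0 ≤ (ε * w 1 + 1) / -(ε * deriv w 1) :=
      div_nonneg (by linarith) (le_of_lt hden)
    linarith
  have hfT := hstepC _ hTge
  have hT1 : 1 + (ε * w 1 + 1) / -(ε * deriv w 1) - 1
      = (ε * w 1 + 1) / -(ε * deriv w 1) := by ring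
  rw [hT1] at hfT
  have hfin := harith (ε * w 1) (ε * deriv w 1) hf1 hg1
  have hneg : ε * w (1 + (ε * w 1 + 1) / -(ε * deriv w 1)) ≤ -1 := le_trans hfT hfin
  linarith [hfpos _ (by linarith : (0:ℝ) ≤ 1 + (ε * w 1 + 1) / -(ε * deriv w 1))]
end

section
/- Let a ∈ (-1,0) ∪ (0,∞), T > 0, and suppose the even solution w of w'' = −2p_a·w with w(0) = −1, w'(0) = 0 satisfies w(T) ≠ 0. Then for every continuous even g : [-T,T] → ℝ there exists a unique φ ∈ C²([-T,T]) which is even, satisfies φ(±T) = 0, and solves φ'' + 2p_a·φ = 2x_a²·g on [-T,T]. -/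
open Real

section JacobiHelpers

open Set intervalIntegral MeasureTheory Function


lemma prim_hasDerivAt {h : ℝ → ℝ} (hh : Continuous h) (t : ℝ) :
    HasDerivAt (fun b => ∫ s in (0:ℝ)..b, h s) (h t) t :=
  (hh.integral_hasStrictDerivAt 0 t).hasDerivAt

lemma prim_cont {h : ℝ → ℝ} (hh : Continuous h) :
    Continuous (fun b => ∫ s in (0:ℝ)..b, h s) :=
  (Differentiable.continuous (fun t => (prim_hasDerivAt hh t).differentiableAt))

noncomputable def ker (q E : ℝ → ℝ) (t : ℝ) : ℝ := ∫ s in (0:ℝ)..t, (t - s) * (q s * E s)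

lemma ker_eq {q E : ℝ → ℝ} (hq : Continuous q) (hE : Continuous E) (t : ℝ) :
    ker q E t = t * (∫ s in (0:ℝ)..t, q s * E s) - ∫ s in (0:ℝ)..t, s * (q s * E s) := by
  unfold ker
  rw [show (fun s => (t - s) * (q s * E s)) = fun s => t * (q s * E s) - s * (q s * E s) by
    funext s; ring]
  have h1 : IntervalIntegrable (fun s => t * (q s * E s)) volume 0 t :=
    (Continuous.intervalIntegrable (by fun_prop) _ _)
  have h2 : IntervalIntegrable (fun s => s * (q s * E s)) volume 0 t :=
    (Continuous.intervalIntegrable (by fun_prop) _ _)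
  rw [integral_sub h1 h2, intervalIntegral.integral_const_mul]

lemma ker_cont {q E : ℝ → ℝ} (hq : Continuous q) (hE : Continuous E) :
    Continuous (ker q E) := by
  have h : Continuous fun t => t * (∫ s in (0:ℝ)..t, q s * E s)
      - ∫ s in (0:ℝ)..t, s * (q s * E s) :=
    (continuous_id.mul (prim_cont (hq.mul hE))).sub
      (prim_cont (continuous_id.mul (hq.mul hE)))
  exact h.congr fun t => (ker_eq hq hE t).symm

lemma ker_hasDerivAt {q E : ℝ → ℝ} (hq : Continuous q) (hE : Continuous E) (t : ℝ) :
    HasDerivAt (ker q E) (∫ s in (0:ℝ)..t, q s * E s) t := by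
  have h1 : HasDerivAt (fun t => t * (∫ s in (0:ℝ)..t, q s * E s)
      - ∫ s in (0:ℝ)..t, s * (q s * E s))
      ((1 : ℝ) * (∫ s in (0:ℝ)..t, q s * E s) + t * (q t * E t) - t * (q t * E t)) t :=
    ((hasDerivAt_id t).mul (prim_hasDerivAt (hq.mul hE) t)).sub
      (prim_hasDerivAt (continuous_id.mul (hq.mul hE)) t)
  have h2 := h1.congr_of_eventuallyEq (Filter.Eventually.of_forall (ker_eq hq hE))
  refine h2.congr_deriv (Eq.symm ?_); ring

lemma abs_le_of_mem_uIoc {t s : ℝ} (hs : s ∈ Set.uIoc 0 t) : |s| ≤ |t| := by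
  rcases Set.mem_uIoc.mp hs with ⟨h1, h2⟩ | ⟨h1, h2⟩ <;>
    cases abs_cases s <;> cases abs_cases t <;> linarith

lemma abs_integral_abs_pow (n : ℕ) (t : ℝ) :
    |∫ s in (0:ℝ)..t, |s| ^ n| = |t| ^ (n+1) / (n+1) := by
  have hpos : ∀ u : ℝ, 0 ≤ u → (∫ s in (0:ℝ)..u, |s| ^ n) = u ^ (n+1) / (n+1) := by
    intro u hu
    rw [integral_congr (g := fun s => s ^ n) ?_, integral_pow]
    · norm_num
    · intro s hs
      rw [Set.uIcc_of_le hu] at hs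
      simp [abs_of_nonneg hs.1]
  rcases le_or_gt 0 t with ht | ht
  · rw [hpos t ht, abs_of_nonneg (by positivity), abs_of_nonneg ht]
  · have h1 : (∫ s in (0:ℝ)..t, |s| ^ n) = ∫ s in (0:ℝ)..t, |(-s)| ^ n := by
      congr 1; funext s; rw [abs_neg]
    rw [h1, integral_comp_neg (f := fun s => |s| ^ n)]
    rw [neg_zero, show (∫ s in (-t)..(0:ℝ), |s| ^ n) = -(∫ s in (0:ℝ)..(-t), |s| ^ n) by
      rw [integral_symm]]
    rw [hpos (-t) (by linarith), abs_neg,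
      abs_of_nonneg (div_nonneg (pow_nonneg (by linarith) _) (by positivity)),
      abs_of_nonpos ht.le]

lemma ker_diff_est {q E E' : ℝ → ℝ} (hq : Continuous q) (hE : Continuous E) (hE' : Continuous E')
    {C B c : ℝ} (hC : ∀ s, |q s| ≤ C) (hc : 0 ≤ c) (n : ℕ) (hB : 0 ≤ B) (t : ℝ) (ht : |t| ≤ c)
    (hEE' : ∀ s ∈ Set.uIoc 0 t, |E s - E' s| ≤ B * |s| ^ n) :
    |ker q E t - ker q E' t| ≤ c * C * B * (|t| ^ (n+1) / (n+1)) := by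
  have hC0 : 0 ≤ C := le_trans (abs_nonneg _) (hC 0)
  have hsub : ker q E t - ker q E' t = ∫ s in (0:ℝ)..t, (t - s) * (q s * (E s - E' s)) := by
    unfold ker
    have h1 : IntervalIntegrable (fun s => (t - s) * (q s * E s)) volume 0 t :=
      (Continuous.intervalIntegrable (by fun_prop) _ _)
    have h2 : IntervalIntegrable (fun s => (t - s) * (q s * E' s)) volume 0 t :=
      (Continuous.intervalIntegrable (by fun_prop) _ _)
    rw [← integral_sub h1 h2]
    congr 1; funext s; ring
  rw [hsub]
  have key : ‖∫ s in (0:ℝ)..t, (t - s) * (q s * (E s - E' s))‖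
      ≤ |∫ s in (0:ℝ)..t, c * C * B * |s| ^ n| := by
    apply intervalIntegral.norm_integral_le_abs_of_norm_le
      ((MeasureTheory.ae_restrict_iff' measurableSet_uIoc).mpr ?_)
    · exact ((continuous_const.mul (continuous_abs.pow n)).intervalIntegrable _ _)
    filter_upwards with s hs
    · have h1 : |t - s| ≤ c := by
        rcases Set.mem_uIoc.mp hs with ⟨h1, h2⟩ | ⟨h1, h2⟩ <;>
          cases abs_cases (t - s) <;> cases abs_cases t <;> linarith
      have h2 : |E s - E' s| ≤ B * |s| ^ n := hEE' s hs
      rw [Real.norm_eq_abs, abs_mul, abs_mul]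
      calc |t - s| * (|q s| * |E s - E' s|) ≤ c * (C * (B * |s| ^ n)) := by
            apply mul_le_mul h1 _ (by positivity) hc
            exact mul_le_mul (hC s) h2 (abs_nonneg _) hC0
        _ = c * C * B * |s| ^ n := by ring
  rw [Real.norm_eq_abs] at key
  calc |∫ s in (0:ℝ)..t, (t - s) * (q s * (E s - E' s))|
      ≤ |∫ s in (0:ℝ)..t, c * C * B * |s| ^ n| := key
    _ = c * C * B * (|t| ^ (n+1) / (n+1)) := by
        rw [intervalIntegral.integral_const_mul, abs_mul, abs_integral_abs_pow,
          abs_of_nonneg (by positivity)]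

open scoped Nat in
lemma volterra_local (q : ℝ → ℝ) (hq : Continuous q) (C : ℝ) (hC : ∀ t, |q t| ≤ C)
    (c : ℝ) (hc : 0 < c) :
    ∃ V : ℝ → ℝ, Continuous V ∧ ∀ t : ℝ, |t| ≤ c → V t = t + ker q V t := by
  have hcc : -c ≤ c := by linarith
  have hC0 : 0 ≤ C := le_trans (abs_nonneg _) (hC 0)
  haveI hne : Nonempty (Icc (-c) c) := ⟨⟨0, by constructor <;> linarith⟩⟩
  set ext : C(Icc (-c) c, ℝ) → ℝ → ℝ := fun u t => u (projIcc (-c) c hcc t) with hext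
  have hextc : ∀ u, Continuous (ext u) := fun u => u.continuous.comp continuous_projIcc
  set Φ : C(Icc (-c) c, ℝ) → C(Icc (-c) c, ℝ) := fun u =>
    ⟨fun t => (t : ℝ) + ker q (ext u) (t : ℝ),
      continuous_subtype_val.add ((ker_cont hq (hextc u)).comp continuous_subtype_val)⟩
    with hΦ
  have hext_mem : ∀ u, ∀ t : ℝ, ∀ ht : t ∈ Icc (-c) c, ext u t = u ⟨t, ht⟩ := by
    intro u t ht; rw [hext]; simp only []; rw [projIcc_of_mem hcc ht]
  have hΦapp : ∀ u, ∀ t : ℝ, |t| ≤ c → ext (Φ u) t = t + ker q (ext u) t := by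
    intro u t ht
    have htm : t ∈ Icc (-c) c := by constructor <;> cases abs_le.mp ht <;> linarith
    rw [hext_mem (Φ u) t htm]
    rfl
  -- iterated estimate
  have key : ∀ n : ℕ, ∀ u u' : C(Icc (-c) c, ℝ), ∀ t : ℝ, |t| ≤ c →
      |ext (Φ^[n] u) t - ext (Φ^[n] u') t|
        ≤ dist u u' * ((c * C * c) ^ n * (|t| / c) ^ n / n !) := by
    intro n
    induction n with
    | zero =>
      intro u u' t ht
      have htm : t ∈ Icc (-c) c := by constructor <;> cases abs_le.mp ht <;> linarith
      simp only [iterate_zero_apply]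
      rw [hext_mem u t htm, hext_mem u' t htm]
      simpa [Real.dist_eq] using ContinuousMap.dist_apply_le_dist (f := u) (g := u') ⟨t, htm⟩
    | succ n ih =>
      intro u u' t ht
      rw [iterate_succ_apply', iterate_succ_apply',
        hΦapp _ t ht, hΦapp _ t ht]
      have h1 : |ker q (ext (Φ^[n] u)) t - ker q (ext (Φ^[n] u')) t|
          ≤ c * C * (dist u u' * ((c * C * c) ^ n / (c ^ n * n !))) * (|t| ^ (n+1) / (n+1)) := by
        apply ker_diff_est hq (hextc _) (hextc _) hC hc.le n ?_ t ht
        · intro s hs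
          have hs' : |s| ≤ c := le_trans (abs_le_of_mem_uIoc hs) ht
          have := ih u u' s hs'
          calc |ext (Φ^[n] u) s - ext (Φ^[n] u') s|
              ≤ dist u u' * ((c * C * c) ^ n * (|s| / c) ^ n / n !) := this
            _ = dist u u' * ((c * C * c) ^ n / (c ^ n * n !)) * |s| ^ n := by
                rw [div_pow]; field_simp
        · positivity
      calc |t + ker q (ext (Φ^[n] u)) t - (t + ker q (ext (Φ^[n] u')) t)|
          = |ker q (ext (Φ^[n] u)) t - ker q (ext (Φ^[n] u')) t| := by ring_nf
        _ ≤ c * C * (dist u u' * ((c * C * c) ^ n / (c ^ n * n !))) * (|t| ^ (n+1) / (n+1)) := h1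
        _ ≤ dist u u' * ((c * C * c) ^ (n+1) * (|t| / c) ^ (n+1) / (n+1) !) := by
            rw [div_pow]
            rw [Nat.factorial_succ]
            have hcn : (0:ℝ) < c ^ n := by positivity
            have hcn1 : (0:ℝ) < c ^ (n+1) := by positivity
            have hfac : (0:ℝ) < (n ! : ℝ) := by positivity
            have : c * C * (dist u u' * ((c * C * c) ^ n / (c ^ n * n !))) * (|t| ^ (n+1) / (n+1))
                = dist u u' * ((c * C * c) ^ n * (c * C) * |t| ^ (n+1) / (c ^ n * ((n+1) * n !))) := by
              field_simp
            rw [this]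
            apply mul_le_mul_of_nonneg_left _ dist_nonneg
            apply le_of_eq
            rw [show (c * C * c) ^ (n+1) = (c * C * c) ^ n * (c * C * c) by ring]
            field_simp
            push_cast; ring
  -- contraction for some iterate
  have hlim := FloorSemiring.tendsto_pow_div_factorial_atTop (c * C * c)
  have hev : ∀ᶠ n : ℕ in Filter.atTop, (c * C * c) ^ n / n ! < 1 :=
    hlim.eventually (gt_mem_nhds zero_lt_one)
  obtain ⟨N, hN⟩ := hev.exists
  set K : NNReal := Real.toNNReal ((c * C * c) ^ N / N !) with hK
  have hKval : (K : ℝ) = (c * C * c) ^ N / N ! := Real.coe_toNNReal _ (by positivity)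
  have hcontr : ContractingWith K (Φ^[N]) := by
    constructor
    · rw [← NNReal.coe_lt_coe]
      simpa [hKval] using hN
    · apply LipschitzWith.of_dist_le_mul
      intro u u'
      rw [ContinuousMap.dist_le (by positivity)]
      intro z
      have hz : |(z : ℝ)| ≤ c := by
        cases z.2 with
        | intro h1 h2 => rw [abs_le]; constructor <;> linarith
      have := key N u u' z hz
      have h2 : dist u u' * ((c * C * c) ^ N * (|(z:ℝ)| / c) ^ N / N !)
          ≤ (K : ℝ) * dist u u' := by
        rw [hKval]
        have h3 : (|(z:ℝ)| / c) ^ N ≤ 1 := by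
          apply pow_le_one₀ (by positivity)
          rw [div_le_one hc]; exact hz
        calc dist u u' * ((c * C * c) ^ N * (|(z:ℝ)| / c) ^ N / N !)
            ≤ dist u u' * ((c * C * c) ^ N * 1 / N !) := by
              gcongr
          _ = (c * C * c) ^ N / N ! * dist u u' := by ring
      calc dist ((Φ^[N] u) z) ((Φ^[N] u') z)
          = |ext (Φ^[N] u) (z:ℝ) - ext (Φ^[N] u') (z:ℝ)| := by
            rw [Real.dist_eq, hext_mem _ _ z.2, hext_mem _ _ z.2]
        _ ≤ (K:ℝ) * dist u u' := le_trans this h2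
  obtain ⟨u, hu⟩ : ∃ u, Φ u = u := ⟨_, hcontr.isFixedPt_fixedPoint_iterate⟩
  refine ⟨ext u, hextc u, ?_⟩
  intro t ht
  have := hΦapp u t ht
  rw [hu] at this
  exact this

/-- Uniqueness for second order linear ODEs `f'' = q f` with bounded coefficient. -/
lemma second_order_unique {q : ℝ → ℝ} {C : ℝ} (hqC : ∀ t, |q t| ≤ C)
    {a b t₀ : ℝ} (ht₀ : t₀ ∈ Ioo a b)
    {f f' g g' : ℝ → ℝ}
    (hf : ∀ t ∈ Ioo a b, HasDerivAt f (f' t) t)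
    (hf' : ∀ t ∈ Ioo a b, HasDerivAt f' (q t * f t) t)
    (hg : ∀ t ∈ Ioo a b, HasDerivAt g (g' t) t)
    (hg' : ∀ t ∈ Ioo a b, HasDerivAt g' (q t * g t) t)
    (h1 : f t₀ = g t₀) (h2 : f' t₀ = g' t₀) :
    ∀ t ∈ Ioo a b, f t = g t := by
  have hC0 : (0:ℝ) ≤ C := le_trans (abs_nonneg _) (hqC 0)
  set K : NNReal := ⟨max 1 C, le_trans zero_le_one (le_max_left _ _)⟩ with hK
  set V : ℝ → ℝ × ℝ → ℝ × ℝ := fun t y => (y.2, q t * y.1) with hV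
  have hlip : ∀ t, LipschitzOnWith K (V t) univ := by
    intro t
    rw [lipschitzOnWith_iff_dist_le_mul]
    intro y _ z _
    rw [Prod.dist_eq, Prod.dist_eq]
    have h1' : dist y.2 z.2 ≤ (K:ℝ) * max (dist y.1 z.1) (dist y.2 z.2) := by
      calc dist y.2 z.2 ≤ 1 * max (dist y.1 z.1) (dist y.2 z.2) := by
            rw [one_mul]; exact le_max_right _ _
        _ ≤ (K:ℝ) * max (dist y.1 z.1) (dist y.2 z.2) := by
            apply mul_le_mul_of_nonneg_right (le_max_left _ _)
            positivity
    have h2' : dist (q t * y.1) (q t * z.1) ≤ (K:ℝ) * max (dist y.1 z.1) (dist y.2 z.2) := by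
      rw [Real.dist_eq, ← mul_sub, abs_mul]
      calc |q t| * |y.1 - z.1| ≤ C * dist y.1 z.1 := by
            apply mul_le_mul (hqC t) le_rfl (abs_nonneg _) hC0
        _ ≤ (K:ℝ) * max (dist y.1 z.1) (dist y.2 z.2) := by
            apply mul_le_mul (le_max_right _ _) (le_max_left _ _) dist_nonneg
            positivity
    simpa using max_le h1' h2'
  have key := ODE_solution_unique_of_mem_Ioo (v := V) (s := fun _ => univ) (K := K)
    (f := fun t => (f t, f' t)) (g := fun t => (g t, g' t)) (t₀ := t₀) (a := a) (b := b)
    (fun t _ => hlip t) ht₀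
    (fun t ht => ⟨((hf t ht).prodMk (hf' t ht)), mem_univ _⟩)
    (fun t ht => ⟨((hg t ht).prodMk (hg' t ht)), mem_univ _⟩)
    (by simp only [h1, h2])
  intro t ht
  have := key ht
  exact congrArg Prod.fst this

/-- even differentiable function has vanishing derivative at 0 -/
lemma even_deriv_zero {f : ℝ → ℝ} (hf : DifferentiableAt ℝ f 0) (h : ∀ t, f (-t) = f t) :
    deriv f 0 = 0 := by
  have h1 : HasDerivAt f (deriv f 0) 0 := hf.hasDerivAt
  have h1' : HasDerivAt f (deriv f 0) (-(0:ℝ)) := by simpa using h1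
  have h2 : HasDerivAt (fun t => f (-t)) (deriv f 0 * (-1)) 0 :=
    h1'.comp 0 (by simpa using (hasDerivAt_neg (0:ℝ)))
  have h3 : HasDerivAt f (deriv f 0 * (-1)) 0 := by
    apply h2.congr_of_eventuallyEq
    filter_upwards with t using (h t).symm
  linarith [h1.unique h3]

lemma volterra_exists (q : ℝ → ℝ) (hq : Continuous q) (C : ℝ) (hC : ∀ t, |q t| ≤ C) :
    ∃ v : ℝ → ℝ, Continuous v ∧ ContDiff ℝ 2 v ∧ v 0 = 0 ∧ deriv v 0 = 1 ∧
      (∀ t, HasDerivAt v (deriv v t) t) ∧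
      (∀ t, HasDerivAt (deriv v) (q t * v t) t) ∧
      ∀ t, deriv (deriv v) t = q t * v t := by
  -- local solutions
  have hloc : ∀ c : ℝ, 0 < c → ∃ V : ℝ → ℝ, Continuous V ∧
      ∀ t : ℝ, |t| ≤ c → V t = t + ker q V t := fun c hc => volterra_local q hq C hC c hc
  set V : ℝ → ℝ → ℝ := fun c => if hc : 0 < c then (hloc c hc).choose else 0 with hV
  have hVc : ∀ c, 0 < c → Continuous (V c) := by
    intro c hc; rw [hV]; simp only [dif_pos hc]; exact (hloc c hc).choose_spec.1
  have hVeq : ∀ c, 0 < c → ∀ t, |t| ≤ c → V c t = t + ker q (V c) t := by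
    intro c hc; rw [hV]; simp only [dif_pos hc]; exact (hloc c hc).choose_spec.2
  -- basic consequences
  have hV0 : ∀ c, 0 < c → V c 0 = 0 := by
    intro c hc
    have := hVeq c hc 0 (by simp [hc.le])
    simpa [ker, intervalIntegral.integral_same] using this
  -- derivative structure of local solutions
  have hVd : ∀ c, 0 < c → ∀ t ∈ Ioo (-c) c,
      HasDerivAt (V c) (1 + ∫ s in (0:ℝ)..t, q s * V c s) t := by
    intro c hc t ht
    have h1 : HasDerivAt (fun τ => τ + ker q (V c) τ)
        (1 + ∫ s in (0:ℝ)..t, q s * V c s) t :=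
      (hasDerivAt_id t).add (ker_hasDerivAt hq (hVc c hc) t)
    apply h1.congr_of_eventuallyEq
    filter_upwards [Ioo_mem_nhds ht.1 ht.2] with τ hτ
    apply hVeq c hc τ
    rw [abs_le]; exact ⟨hτ.1.le, hτ.2.le⟩
  have hVd2 : ∀ c, 0 < c → ∀ t : ℝ,
      HasDerivAt (fun τ => 1 + ∫ s in (0:ℝ)..τ, q s * V c s) (q t * V c t) t := by
    intro c hc t
    exact (prim_hasDerivAt (hq.mul (hVc c hc)) t).const_add 1
  -- compatibility
  have compat : ∀ c₁ c₂ : ℝ, 0 < c₁ → c₁ ≤ c₂ → ∀ t ∈ Ioo (-c₁) c₁, V c₁ t = V c₂ t := by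
    intro c₁ c₂ hc1 h12 t ht
    have hc2 : 0 < c₂ := lt_of_lt_of_le hc1 h12
    have hsub : Ioo (-c₁) c₁ ⊆ Ioo (-c₂) c₂ := Ioo_subset_Ioo (by linarith) h12
    refine second_order_unique (q := q) (C := C) hC (a := -c₁) (b := c₁) (t₀ := 0)
      (by constructor <;> linarith)
      (f' := fun τ => 1 + ∫ s in (0:ℝ)..τ, q s * V c₁ s)
      (g' := fun τ => 1 + ∫ s in (0:ℝ)..τ, q s * V c₂ s)
      (fun τ hτ => hVd c₁ hc1 τ hτ)
      (fun τ hτ => hVd2 c₁ hc1 τ)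
      (fun τ hτ => hVd c₂ hc2 τ (hsub hτ))
      (fun τ hτ => hVd2 c₂ hc2 τ)
      ?_ ?_ t ht
    · rw [hV0 c₁ hc1, hV0 c₂ hc2]
    · simp [intervalIntegral.integral_same]
  -- global solution
  set v : ℝ → ℝ := fun t => V (|t| + 1) t with hv
  have hveq : ∀ t c, 0 < c → |t| < c → v t = V c t := by
    intro t c hc htc
    have hc0 : (0:ℝ) < |t| + 1 := by positivity
    have h1 : V (|t| + 1) t = V (max c (|t| + 1)) t :=
      compat _ _ hc0 (le_max_right _ _) t (by constructor <;> cases abs_lt.mp (by linarith : |t| < |t| + 1) <;> linarith)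
    have h2 : V c t = V (max c (|t| + 1)) t :=
      compat _ _ hc (le_max_left _ _) t (by constructor <;> cases abs_lt.mp htc <;> linarith)
    rw [hv]; simp only []; rw [h1, ← h2]
  have hvcont : Continuous v := by
    rw [continuous_iff_continuousAt]
    intro t₀
    have hc0 : (0:ℝ) < |t₀| + 1 := by positivity
    apply ContinuousAt.congr ((hVc _ hc0).continuousAt)
    filter_upwards [Ioo_mem_nhds (show -(|t₀|+1) < t₀ by cases abs_cases t₀ <;> linarith)
      (show t₀ < |t₀|+1 by cases abs_cases t₀ <;> linarith)] with s hs
    exact (hveq s _ hc0 (by rw [abs_lt]; exact ⟨by linarith [hs.1], hs.2⟩)).symm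
  have hvglob : ∀ t, v t = t + ker q v t := by
    intro t
    have hc0 : (0:ℝ) < |t| + 1 := by positivity
    have h1 := hVeq _ hc0 t (by linarith)
    have h2 : ker q (V (|t|+1)) t = ker q v t := by
      unfold ker
      apply integral_congr
      intro s hs
      have hs' : |s| ≤ |t| := by
        rcases Set.mem_uIcc.mp hs with ⟨h1', h2'⟩ | ⟨h1', h2'⟩ <;>
          cases abs_cases s <;> cases abs_cases t <;> linarith
      show (t - s) * (q s * V (|t|+1) s) = (t - s) * (q s * v s)
      rw [(hveq s _ hc0 (by linarith))]
    rw [← h2, ← h1]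
  -- global derivatives
  have hv0 : v 0 = 0 := by
    have := hvglob 0
    simpa [ker, intervalIntegral.integral_same] using this
  have hvd : ∀ t, HasDerivAt v (1 + ∫ s in (0:ℝ)..t, q s * v s) t := by
    intro t
    have h1 : HasDerivAt (fun τ => τ + ker q v τ)
        (1 + ∫ s in (0:ℝ)..t, q s * v s) t :=
      (hasDerivAt_id t).add (ker_hasDerivAt hq hvcont t)
    exact h1.congr_of_eventuallyEq (Filter.Eventually.of_forall hvglob)
  have hvderiv : deriv v = fun t => 1 + ∫ s in (0:ℝ)..t, q s * v s :=
    funext fun t => (hvd t).deriv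
  have hvd2 : ∀ t, HasDerivAt (deriv v) (q t * v t) t := by
    intro t
    rw [hvderiv]
    exact (prim_hasDerivAt (hq.mul hvcont) t).const_add 1
  have hvd2' : ∀ t, deriv (deriv v) t = q t * v t := fun t => (hvd2 t).deriv
  refine ⟨v, hvcont, ?_, hv0, by rw [hvderiv]; simp [intervalIntegral.integral_same], 
    fun t => by rw [hvderiv]; exact hvd t, hvd2, hvd2'⟩
  rw [show (2 : WithTop ℕ∞) = 1 + 1 by rfl, contDiff_succ_iff_deriv]
  refine ⟨fun t => (hvd t).differentiableAt, by simp, ?_⟩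
  rw [contDiff_one_iff_deriv]
  refine ⟨fun t => (hvd2 t).differentiableAt, ?_⟩
  have : deriv (deriv v) = fun t => q t * v t := funext hvd2'
  rw [this]
  exact hq.mul hvcont

lemma contDiff_two_iff {f : ℝ → ℝ} :
    ContDiff ℝ 2 f ↔ Differentiable ℝ f ∧ Differentiable ℝ (deriv f) ∧
      Continuous (deriv (deriv f)) := by
  rw [show (2 : WithTop ℕ∞) = 1 + 1 by rfl, contDiff_succ_iff_deriv, contDiff_one_iff_deriv]
  simp


end JacobiHelpers

/-- Solvability of the rotationally symmetric Jacobi problem: if the even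
principal solution `w` of `w'' = −2 p_a w` satisfies `w(T) ≠ 0`, then for every
continuous even `g` there is a unique even `C²` function `φ` vanishing at `±T`
and solving `φ'' + 2 p_a φ = 2 x_a² g` on `[-T,T]`. -/
theorem jacobi_dirichlet_solvable (a γ T : ℝ) (x w g : ℝ → ℝ)
    (ha : a ∈ Set.Ioo (-1 : ℝ) 0 ∪ Set.Ioi (0 : ℝ)) (hγ : γ = a * (1 + a))
    (hT : 0 < T)
    (hx : ContDiff ℝ 2 x) (hxpos : ∀ t, 0 < x t)
    (hode : ∀ t, deriv (deriv x) t = (1 + 2 * γ) * x t - 2 * (x t) ^ 3)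
    (hx0 : x 0 = 1 + a) (hx'0 : deriv x 0 = 0)
    (hw : ContDiff ℝ 2 w) (hweven : ∀ t, w (-t) = w t)
    (hwode : ∀ t, deriv (deriv w) t = -2 * ((x t) ^ 2 + γ ^ 2 / (x t) ^ 2) * w t)
    (hw0 : w 0 = -1) (hw'0 : deriv w 0 = 0) (hwT : w T ≠ 0)
    (hg : Continuous g) (hgeven : ∀ t, g (-t) = g t) :
    ∃ φ : ℝ → ℝ,
      (ContDiff ℝ 2 φ ∧ (∀ t, φ (-t) = φ t) ∧ φ T = 0 ∧ φ (-T) = 0 ∧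
        ∀ t ∈ Set.Icc (-T) T,
          deriv (deriv φ) t + 2 * ((x t) ^ 2 + γ ^ 2 / (x t) ^ 2) * φ t
            = 2 * (x t) ^ 2 * g t) ∧
      ∀ ψ : ℝ → ℝ,
        (ContDiff ℝ 2 ψ ∧ (∀ t, ψ (-t) = ψ t) ∧ ψ T = 0 ∧ ψ (-T) = 0 ∧
          ∀ t ∈ Set.Icc (-T) T,
            deriv (deriv ψ) t + 2 * ((x t) ^ 2 + γ ^ 2 / (x t) ^ 2) * ψ t
              = 2 * (x t) ^ 2 * g t) →
        ∀ t ∈ Set.Icc (-T) T, ψ t = φ t := by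
  -- basic positivity facts
  have ha0 : a ≠ 0 := by
    rcases ha with h | h
    · exact ne_of_lt h.2
    · exact ne_of_gt h
  have ha1 : 0 < 1 + a := by
    rcases ha with h | h
    · linarith [h.1]
    · linarith [Set.mem_Ioi.mp h]
  have hK1 : 0 < 1 + 2 * γ := by
    have h1 : 1 + 2 * γ = a ^ 2 + (1 + a) ^ 2 := by rw [hγ]; ring
    rw [h1]; positivity
  have hγ0 : γ ≠ 0 := by rw [hγ]; exact mul_ne_zero ha0 (ne_of_gt ha1)
  -- differentiability of x and w
  obtain ⟨hxdiff, hxdiff2, hxc2⟩ := contDiff_two_iff.mp hx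
  obtain ⟨hwdiff, hwdiff2, hwc2⟩ := contDiff_two_iff.mp hw
  have hxd : ∀ t, HasDerivAt x (deriv x t) t := fun t => (hxdiff t).hasDerivAt
  have hxd2 : ∀ t, HasDerivAt (deriv x) (deriv (deriv x) t) t := fun t => (hxdiff2 t).hasDerivAt
  have hwd : ∀ t, HasDerivAt w (deriv w t) t := fun t => (hwdiff t).hasDerivAt
  have hwd2 : ∀ t, HasDerivAt (deriv w) (deriv (deriv w) t) t := fun t => (hwdiff2 t).hasDerivAt
  -- first integral of the Delaunay ODE
  have hFI : ∀ t, (deriv x t) ^ 2 = (1 + 2 * γ) * (x t) ^ 2 - (x t) ^ 4 - γ ^ 2 := by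
    have hEd : ∀ t, HasDerivAt
        (fun t => (deriv x t) ^ 2 - (1 + 2 * γ) * (x t) ^ 2 + (x t) ^ 4) 0 t := by
      intro t
      have h1 : HasDerivAt (fun t => (deriv x t) ^ 2)
          (2 * deriv x t ^ 1 * deriv (deriv x) t) t := (hxd2 t).pow 2
      have h2 : HasDerivAt (fun t => (1 + 2 * γ) * (x t) ^ 2)
          ((1 + 2 * γ) * (2 * x t ^ 1 * deriv x t)) t := ((hxd t).pow 2).const_mul _
      have h3 : HasDerivAt (fun t => (x t) ^ 4) (4 * x t ^ 3 * deriv x t) t := (hxd t).pow 4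
      have h4 := (h1.sub h2).add h3
      refine h4.congr_deriv (Eq.symm ?_)
      rw [hode t]; ring
    have hconst := is_const_of_deriv_eq_zero
      (f := fun t => (deriv x t) ^ 2 - (1 + 2 * γ) * (x t) ^ 2 + (x t) ^ 4)
      (fun t => (hEd t).differentiableAt) (fun t => (hEd t).deriv)
    intro t
    have h5 := hconst t 0
    simp only [hx0, hx'0] at h5
    rw [hγ] at h5 ⊢
    nlinarith [h5]
  -- bounds on x
  have hx2pos : ∀ t, (0:ℝ) < (x t) ^ 2 := fun t => pow_pos (hxpos t) 2
  have hxub : ∀ t, (x t) ^ 2 ≤ 1 + 2 * γ := by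
    intro t
    nlinarith [hFI t, sq_nonneg (deriv x t), sq_nonneg γ, hx2pos t]
  have hγx : ∀ t, γ ^ 2 / (x t) ^ 2 ≤ 1 + 2 * γ := by
    intro t
    rw [div_le_iff₀ (hx2pos t)]
    nlinarith [hFI t, sq_nonneg (deriv x t), hxub t, hx2pos t]
  -- evenness of x
  have hxeven : ∀ t, x (-t) = x t := by
    have key : ∀ c > (0:ℝ), ∀ t ∈ Set.Ioo (-c) c, x t - x (-t) = 0 := by
      intro c hc
      have hq : ∀ s : ℝ, |(1 + 2*γ) - 2 * ((x s)^2 + x s * x (-s) + (x (-s))^2)| ≤ 7 * (1 + 2*γ) := by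
        intro s
        have h1 := hxub s
        have h2 := hxub (-s)
        rw [abs_le]
        constructor <;> nlinarith [sq_nonneg (x s + x (-s)), sq_nonneg (x s - x (-s)),
          hx2pos s, hx2pos (-s)]
      have hnx : ∀ s : ℝ, HasDerivAt (fun t => x (-t)) (-(deriv x (-s))) s := by
        intro s
        have h1 : HasDerivAt x (deriv x (-s)) (-s) := hxd (-s)
        have := h1.comp s (hasDerivAt_neg s)
        exact this.congr_deriv (by ring)
      have hnx2 : ∀ s : ℝ, HasDerivAt (fun t => deriv x (-t)) (-(deriv (deriv x) (-s))) s := by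
        intro s
        have h1 := (hxd2 (-s)).comp s (hasDerivAt_neg s)
        exact h1.congr_deriv (by ring)
      refine second_order_unique
        (q := fun s => (1 + 2*γ) - 2 * ((x s)^2 + x s * x (-s) + (x (-s))^2))
        (C := 7 * (1 + 2*γ)) hq (a := -c) (b := c) (t₀ := 0) (by constructor <;> linarith)
        (f := fun t => x t - x (-t)) (f' := fun t => deriv x t + deriv x (-t))
        (g := fun _ => 0) (g' := fun _ => 0) ?_ ?_ ?_ ?_ ?_ ?_
      · intro t ht
        have := (hxd t).sub (hnx t)
        refine this.congr_deriv (Eq.symm ?_); ring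
      · intro t ht
        have := (hxd2 t).add (hnx2 t)
        refine this.congr_deriv (Eq.symm ?_)
        rw [hode t, hode (-t)]; ring
      · intro t ht; exact hasDerivAt_const t (0:ℝ)
      · intro t ht; simpa using hasDerivAt_const t (0:ℝ)
      · simp
      · simp [hx'0]
    intro t
    have hc : (0:ℝ) < |t| + 1 := by positivity
    have := key (|t| + 1) hc t (by constructor <;> cases abs_cases t <;> linarith)
    linarith
  -- the coefficient p and q
  set p : ℝ → ℝ := fun t => (x t) ^ 2 + γ ^ 2 / (x t) ^ 2 with hp
  have hpcont : Continuous p := by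
    apply (hxdiff.continuous.pow 2).add
    exact continuous_const.div (hxdiff.continuous.pow 2) (fun t => ne_of_gt (hx2pos t))
  have hpeven : ∀ t, p (-t) = p t := by intro t; simp only [hp, hxeven t]
  have hpbd : ∀ t, |p t| ≤ 2 * (1 + 2 * γ) := by
    intro t
    have h1 : 0 ≤ p t := by
      apply add_nonneg (sq_nonneg _)
      positivity
    rw [abs_of_nonneg h1]
    have := hγx t
    have := hxub t
    simp only [hp]; linarith
  set q : ℝ → ℝ := fun t => -2 * p t with hq'
  have hqcont : Continuous q := (continuous_const.mul hpcont)
  have hqbd : ∀ t, |q t| ≤ 4 * (1 + 2 * γ) := by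
    intro t
    rw [show q t = -2 * p t from rfl, abs_mul]
    calc |(-2:ℝ)| * |p t| ≤ 2 * (2 * (1 + 2*γ)) := by
          rw [show |(-2:ℝ)| = 2 by norm_num]
          exact mul_le_mul_of_nonneg_left (hpbd t) (by norm_num)
      _ = 4 * (1 + 2*γ) := by ring
  have hqeven : ∀ t, q (-t) = q t := fun t => by simp only [hq', hpeven t]
  -- w satisfies w'' = q w
  have hwd2' : ∀ t, HasDerivAt (deriv w) (q t * w t) t := by
    intro t
    have := hwd2 t
    rw [hwode t] at this
    convert this using 1
  -- construct the odd solution v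
  obtain ⟨v, hvcont, hvC2, hv0, hv'0, hvd, hvd2, hvode⟩ :=
    volterra_exists q hqcont (4 * (1 + 2*γ)) hqbd
  -- v is odd
  have hvodd : ∀ t, v (-t) = -v t := by
    have key : ∀ c > (0:ℝ), ∀ t ∈ Set.Ioo (-c) c, (fun t => -v (-t)) t = v t := by
      intro c hc
      have hnv : ∀ s : ℝ, HasDerivAt (fun t => -v (-t)) (deriv v (-s)) s := by
        intro s
        have h1 := ((hvd (-s)).comp s (hasDerivAt_neg s)).neg
        exact h1.congr_deriv (by ring)
      have hnv2 : ∀ s : ℝ, HasDerivAt (fun t => deriv v (-t)) (q s * (-v (-s))) s := by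
        intro s
        have h1 := (hvd2 (-s)).comp s (hasDerivAt_neg s)
        have h2 : q (-s) * v (-s) * -1 = q s * (-v (-s)) := by rw [hqeven s]; ring
        exact h1.congr_deriv h2
      refine second_order_unique (q := q) (C := 4 * (1 + 2*γ)) hqbd
        (a := -c) (b := c) (t₀ := 0) (by constructor <;> linarith)
        (f := fun t => -v (-t)) (f' := fun t => deriv v (-t))
        (g := v) (g' := deriv v) ?_ ?_ ?_ ?_ ?_ ?_
      · intro t ht; exact hnv t
      · intro t ht; exact hnv2 t
      · intro t ht; exact hvd t
      · intro t ht; exact hvd2 t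
      · simp [hv0]
      · simp [hv'0]
    intro t
    have hc : (0:ℝ) < |t| + 1 := by positivity
    have := key (|t| + 1) hc (-t) (by constructor <;> cases abs_cases t <;> linarith)
    simp only [neg_neg] at this
    linarith
  -- Wronskian
  have hWr : ∀ t, w t * deriv v t - deriv w t * v t = -1 := by
    have hWd : ∀ t, HasDerivAt (fun t => w t * deriv v t - deriv w t * v t) 0 t := by
      intro t
      have h1 := ((hwd t).mul (hvd2 t)).sub ((hwd2' t).mul (hvd t))
      refine h1.congr_deriv (Eq.symm ?_); ring
    have hconst := is_const_of_deriv_eq_zero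
      (f := fun t => w t * deriv v t - deriv w t * v t)
      (fun t => (hWd t).differentiableAt) (fun t => (hWd t).deriv)
    intro t
    have h5 := hconst t 0
    simp only [hw0, hw'0, hv0, hv'0] at h5
    rw [h5]; ring
  -- the inhomogeneity
  set f : ℝ → ℝ := fun t => 2 * (x t) ^ 2 * g t with hf
  have hfcont : Continuous f := (continuous_const.mul (hxdiff.continuous.pow 2)).mul hg
  have hfeven : ∀ t, f (-t) = f t := by intro t; simp only [hf, hxeven t, hgeven t]
  -- the primitives
  set F : ℝ → ℝ := fun t => ∫ s in (0:ℝ)..t, v s * f s with hF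
  set G : ℝ → ℝ := fun t => ∫ s in (0:ℝ)..t, w s * f s with hG
  have hFd : ∀ t, HasDerivAt F (v t * f t) t := fun t => prim_hasDerivAt (hvcont.mul hfcont) t
  have hGd : ∀ t, HasDerivAt G (w t * f t) t :=
    fun t => prim_hasDerivAt ((hwdiff.continuous).mul hfcont) t
  have hFeven : ∀ t, F (-t) = F t := by
    intro t
    have h1 : (∫ s in (0:ℝ)..t, (fun s => v s * f s) (-s)) = ∫ s in (-t)..(0:ℝ), v s * f s := by
      simpa using intervalIntegral.integral_comp_neg (a := (0:ℝ)) (b := t)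
        (f := fun s => v s * f s)
    have h2 : (∫ s in (0:ℝ)..t, (fun s => v s * f s) (-s)) = -F t := by
      rw [show (fun s => (fun s => v s * f s) (-s)) = fun s => -(v s * f s) by
        funext s; simp [hvodd s, hfeven s]]
      rw [intervalIntegral.integral_neg]
    have h3 : (∫ s in (-t)..(0:ℝ), v s * f s) = -F (-t) := by
      rw [intervalIntegral.integral_symm]
    rw [h2, h3] at h1
    linarith
  have hGodd : ∀ t, G (-t) = -G t := by
    intro t
    have h1 : (∫ s in (0:ℝ)..t, (fun s => w s * f s) (-s)) = ∫ s in (-t)..(0:ℝ), w s * f s := by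
      simpa using intervalIntegral.integral_comp_neg (a := (0:ℝ)) (b := t)
        (f := fun s => w s * f s)
    have h2 : (∫ s in (0:ℝ)..t, (fun s => w s * f s) (-s)) = G t := by
      rw [show (fun s => (fun s => w s * f s) (-s)) = fun s => w s * f s by
        funext s; simp [hweven s, hfeven s]]
    have h3 : (∫ s in (-t)..(0:ℝ), w s * f s) = -G (-t) := by
      rw [intervalIntegral.integral_symm]
    rw [h2, h3] at h1
    linarith
  -- the solution
  set c₀ : ℝ := (v T * G T) / w T - F T with hc₀
  set φ : ℝ → ℝ := fun t => w t * (F t + c₀) - v t * G t with hφ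
  have hφT : φ T = 0 := by
    simp only [hφ, hc₀]
    field_simp
    ring
  have hφeven : ∀ t, φ (-t) = φ t := by
    intro t
    simp only [hφ, hweven t, hvodd t, hFeven t, hGodd t]
    ring
  have hφmT : φ (-T) = 0 := by rw [hφeven T, hφT]
  -- derivatives of φ
  set φ' : ℝ → ℝ := fun t => deriv w t * (F t + c₀) - deriv v t * G t with hφ'
  have hφd : ∀ t, HasDerivAt φ (φ' t) t := by
    intro t
    have h1 := ((hwd t).mul ((hFd t).add_const c₀)).sub ((hvd t).mul (hGd t))
    refine h1.congr_deriv (Eq.symm ?_)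
    simp only [hφ']; ring
  have hφd2 : ∀ t, HasDerivAt φ' (q t * φ t + f t) t := by
    intro t
    have h1 := ((hwd2' t).mul ((hFd t).add_const c₀)).sub ((hvd2 t).mul (hGd t))
    refine h1.congr_deriv (Eq.symm ?_)
    have h2 := hWr t
    simp only [hφ]
    linear_combination f t * h2
  have hφderiv : deriv φ = φ' := funext fun t => (hφd t).deriv
  have hφderiv2 : ∀ t, deriv (deriv φ) t = q t * φ t + f t := by
    intro t
    rw [hφderiv]
    exact (hφd2 t).deriv
  have hφC2 : ContDiff ℝ 2 φ := by
    rw [contDiff_two_iff]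
    refine ⟨fun t => (hφd t).differentiableAt, ?_, ?_⟩
    · rw [hφderiv]; exact fun t => (hφd2 t).differentiableAt
    · rw [hφderiv]
      have : deriv φ' = fun t => q t * φ t + f t := funext fun t => (hφd2 t).deriv
      rw [this]
      apply ((hqcont.mul ?_).add hfcont)
      exact Differentiable.continuous (fun t => (hφd t).differentiableAt)
  have hφode : ∀ t ∈ Set.Icc (-T) T,
      deriv (deriv φ) t + 2 * ((x t) ^ 2 + γ ^ 2 / (x t) ^ 2) * φ t = 2 * (x t) ^ 2 * g t := by
    intro t ht
    rw [hφderiv2 t]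
    simp only [hq', hp, hf]
    ring
  refine ⟨φ, ⟨hφC2, hφeven, hφT, hφmT, hφode⟩, ?_⟩
  rintro ψ ⟨hψC2, hψeven, hψT, hψmT, hψode⟩
  obtain ⟨hψdiff, hψdiff2, hψc2⟩ := contDiff_two_iff.mp hψC2
  have hψd : ∀ t, HasDerivAt ψ (deriv ψ t) t := fun t => (hψdiff t).hasDerivAt
  have hψd2 : ∀ t, HasDerivAt (deriv ψ) (deriv (deriv ψ) t) t := fun t => (hψdiff2 t).hasDerivAt
  set δ : ℝ → ℝ := fun t => ψ t - φ t with hδ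
  set δ' : ℝ → ℝ := fun t => deriv ψ t - φ' t with hδ'
  have hδd : ∀ t, HasDerivAt δ (δ' t) t := fun t => (hψd t).sub (hφd t)
  have hδd2 : ∀ t ∈ Set.Ioo (-T) T, HasDerivAt δ' (q t * δ t) t := by
    intro t ht
    have h1 := (hψd2 t).sub (hφd2 t)
    have h2 : deriv (deriv ψ) t = q t * ψ t + f t := by
      have h3 := hψode t (Set.mem_Icc_of_Ioo ht)
      simp only [hq', hp, hf]
      linarith [h3]
    rw [h2] at h1
    refine h1.congr_deriv (Eq.symm ?_)
    simp only [hδ]; ring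
  have hδ'0 : δ' 0 = 0 := by
    have e1 : deriv ψ 0 = 0 := even_deriv_zero (hψdiff 0) hψeven
    have e2 : deriv φ 0 = 0 := even_deriv_zero ((hφd 0).differentiableAt) hφeven
    rw [hφderiv] at e2
    simp only [hδ', e1, e2]
    ring
  have key := second_order_unique (q := q) (C := 4 * (1 + 2*γ)) hqbd
    (a := -T) (b := T) (t₀ := 0) ⟨neg_lt_zero.mpr hT, hT⟩
    (f := δ) (f' := δ')
    (g := fun t => -(δ 0) * w t) (g' := fun t => -(δ 0) * deriv w t)
    (fun t _ => hδd t) hδd2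
    (fun t _ => (hwd t).const_mul _)
    (fun t _ => by
      have := (hwd2' t).const_mul (-(δ 0))
      refine this.congr_deriv (Eq.symm ?_)
      ring)
    (by rw [hw0]; ring)
    (by rw [hδ'0, hw'0]; ring)
  have hδcont : Continuous δ := Differentiable.continuous (fun t => (hδd t).differentiableAt)
  have hηcont : Continuous (fun t => -(δ 0) * w t) := continuous_const.mul hwdiff.continuous
  have hclos : Set.EqOn δ (fun t => -(δ 0) * w t) (Set.Icc (-T) T) := by
    have h1 : Set.EqOn δ (fun t => -(δ 0) * w t) (Set.Ioo (-T) T) := fun t ht => key t ht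
    have h2 := h1.closure hδcont hηcont
    rwa [closure_Ioo (show -T ≠ T by linarith)] at h2
  have hδT : δ T = 0 := by simp only [hδ, hψT, hφT]; ring
  have hδ00 : δ 0 = 0 := by
    have h1 := hclos (Set.right_mem_Icc.mpr (by linarith))
    rw [hδT] at h1
    simp only [] at h1
    rcases mul_eq_zero.mp h1.symm with h | h
    · linarith [neg_eq_zero.mp h]
    · exact absurd h hwT
  intro t ht
  have h1 := hclos ht
  simp only [hδ00] at h1
  simp only [hδ] at h1
  linarith [h1]
end

section
/- Fix a ∈ (-1,0) ∪ (0,∞) with a ≠ -1/2, γ = a(1+a), and let w_{a,0} be the even solution of w'' = −2p_a·w with w(0) = −1, w'(0) = 0. Then w_{a,0}(k·τ_a) = (−1)^{k+1} for every k ∈ ℕ, where τ_a is the half-period of x_a (so that x_a(2nτ_a) = 1+a and x_a((2n+1)τ_a) = |a|). -/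
open Real

/-- Values of the even principal Jacobi field `w_{a,0}` at multiples of the
half-period: `w_{a,0}(k τ_a) = (−1)^{k+1}` for every `k ∈ ℕ`. -/
theorem wa0_values_at_multiples (a γ τ : ℝ) (x z w : ℝ → ℝ)
    (ha : a ∈ Set.Ioo (-1 : ℝ) 0 ∪ Set.Ioi (0 : ℝ)) (ha' : a ≠ -(1 / 2))
    (hγ : γ = a * (1 + a)) (hτ : 0 < τ)
    (hx : ContDiff ℝ 2 x) (hxpos : ∀ t, 0 < x t)
    (hode : ∀ t, deriv (deriv x) t = (1 + 2 * γ) * x t - 2 * (x t) ^ 3)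
    (hx0 : x 0 = 1 + a) (hx'0 : deriv x 0 = 0)
    (hz : ∀ t, deriv z t = (x t) ^ 2 - γ) (hz0 : z 0 = 0)
    (hval : ∀ n : ℕ, x (2 * (n : ℝ) * τ) = 1 + a ∧ x ((2 * (n : ℝ) + 1) * τ) = |a|)
    (hcrit : ∀ k : ℕ, deriv x ((k : ℝ) * τ) = 0)
    (hw : ContDiff ℝ 2 w) (hweven : ∀ t, w (-t) = w t)
    (hwode : ∀ t, deriv (deriv w) t = -2 * ((x t) ^ 2 + γ ^ 2 / (x t) ^ 2) * w t)
    (hw0 : w 0 = -1) (hw'0 : deriv w 0 = 0) :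
    ∀ k : ℕ, w ((k : ℝ) * τ) = (-1 : ℝ) ^ (k + 1) := by
  have h2a : (1 : ℝ) + 2 * a ≠ 0 := by
    intro h; apply ha'; linarith
  have hxne : ∀ t, x t ≠ 0 := fun t => (hxpos t).ne'
  have hxc : Continuous x := hx.continuous
  have hwc : Continuous w := hw.continuous
  -- differentiability facts
  have hx2 : ContDiff ℝ (1 + 1) x := by norm_num at hx ⊢; exact hx
  rw [contDiff_succ_iff_deriv] at hx2
  have hxd : ∀ t, HasDerivAt x (deriv x t) t := fun t => (hx2.1 t).hasDerivAt
  have hxd2 : ∀ t, HasDerivAt (deriv x) ((1 + 2 * γ) * x t - 2 * (x t) ^ 3) t := by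
    intro t
    have h := ((hx2.2.2.differentiable one_ne_zero) t).hasDerivAt
    rwa [hode t] at h
  have hw2 : ContDiff ℝ (1 + 1) w := by norm_num at hw ⊢; exact hw
  rw [contDiff_succ_iff_deriv] at hw2
  have hwd : ∀ t, HasDerivAt w (deriv w t) t := fun t => (hw2.1 t).hasDerivAt
  have hwd2 : ∀ t, HasDerivAt (deriv w)
      (-2 * ((x t) ^ 2 + γ ^ 2 / (x t) ^ 2) * w t) t := by
    intro t
    have h := ((hw2.2.2.differentiable one_ne_zero) t).hasDerivAt
    rwa [hwode t] at h
  -- energy identity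
  have energy : ∀ t, (deriv x t) ^ 2 = (1 + 2 * γ) * (x t) ^ 2 - (x t) ^ 4 - γ ^ 2 := by
    have hF : ∀ t, HasDerivAt
        (fun s => (deriv x s) ^ 2 - (1 + 2 * γ) * (x s) ^ 2 + (x s) ^ 4) 0 t := by
      intro t
      have h := (((hxd2 t).pow 2).sub (((hxd t).pow 2).const_mul (1 + 2 * γ))).add
        ((hxd t).pow 4)
      refine h.congr_deriv (Eq.symm ?_)
      push_cast
      ring
    intro t
    have hconst := is_const_of_deriv_eq_zero
      (fun s => (hF s).differentiableAt) (fun s => (hF s).deriv) t 0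
    simp only [hx0, hx'0] at hconst
    have hc : (1 + a) ^ 4 - (1 + 2 * γ) * (1 + a) ^ 2 = -γ ^ 2 := by rw [hγ]; ring
    linarith
  -- derivative of x'/x
  have hB : ∀ t, HasDerivAt (fun s => deriv x s / x s) (γ ^ 2 / (x t) ^ 2 - (x t) ^ 2) t := by
    intro t
    have h := (hxd2 t).div (hxd t) (hxne t)
    refine h.congr_deriv (Eq.symm ?_)
    rw [eq_div_iff (pow_ne_zero 2 (hxne t)), sub_mul,
      div_mul_cancel₀ _ (pow_ne_zero 2 (hxne t))]
    linear_combination energy t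
  -- the antiderivative Z
  set Z : ℝ → ℝ := fun u => ∫ s in (0:ℝ)..u, ((x s) ^ 2 - γ) with hZdef
  have hZ : ∀ t, HasDerivAt Z ((x t) ^ 2 - γ) t := fun t =>
    (Continuous.integral_hasStrictDerivAt ((hxc.pow 2).sub continuous_const) 0 t).hasDerivAt
  have hZ0 : Z 0 = 0 := intervalIntegral.integral_same
  -- explicit solution W and its derivative W1
  set W : ℝ → ℝ := fun t =>
    (1 + 2 * γ - 2 * (x t) ^ 2 + deriv x t / x t * (2 * Z t - t)) / (1 + 2 * a) with hWdef
  set W1 : ℝ → ℝ := fun t =>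
    (-(4 * x t * deriv x t) + (γ ^ 2 / (x t) ^ 2 - (x t) ^ 2) * (2 * Z t - t)
      + deriv x t / x t * (2 * (x t) ^ 2 - 2 * γ - 1)) / (1 + 2 * a) with hW1def
  have hWd : ∀ t, HasDerivAt W (W1 t) t := by
    intro t
    have h1 : HasDerivAt (fun s => 2 * Z s - s) (2 * ((x t) ^ 2 - γ) - 1) t := by
      exact ((hZ t).const_mul 2).sub (hasDerivAt_id t)
    have h2 := (hB t).mul h1
    have h3 : HasDerivAt (fun s => 1 + 2 * γ - 2 * (x s) ^ 2)
        (-(2 * ((2 : ℕ) * (x t) ^ 1 * deriv x t))) t :=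
      (((hxd t).pow 2).const_mul 2).const_sub (1 + 2 * γ)
    have h4 := (h3.add h2).div_const (1 + 2 * a)
    refine h4.congr_deriv (Eq.symm ?_)
    simp only [hW1def]
    field_simp
    ring
  have hW1d : ∀ t, HasDerivAt W1 (-2 * ((x t) ^ 2 + γ ^ 2 / (x t) ^ 2) * W t) t := by
    intro t
    have h1 : HasDerivAt (fun s => -(4 * x s * deriv x s))
        (-(4 * deriv x t * deriv x t + 4 * x t * ((1 + 2 * γ) * x t - 2 * (x t) ^ 3))) t := by
      have := (((hxd t).const_mul 4).mul (hxd2 t)).neg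
      exact this
    have h2 : HasDerivAt (fun s => γ ^ 2 / (x s) ^ 2 - (x s) ^ 2)
        ((0 * (x t) ^ 2 - γ ^ 2 * ((2 : ℕ) * (x t) ^ 1 * deriv x t)) / ((x t) ^ 2) ^ 2
          - (2 : ℕ) * (x t) ^ 1 * deriv x t) t :=
      (HasDerivAt.div (hasDerivAt_const t (γ ^ 2)) ((hxd t).pow 2)
        (pow_ne_zero 2 (hxne t))).sub ((hxd t).pow 2)
    have h3 : HasDerivAt (fun s => 2 * Z s - s) (2 * ((x t) ^ 2 - γ) - 1) t := by
      exact ((hZ t).const_mul 2).sub (hasDerivAt_id t)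
    have h4 := h2.mul h3
    have h5 : HasDerivAt (fun s => 2 * (x s) ^ 2 - 2 * γ - 1)
        (2 * ((2 : ℕ) * (x t) ^ 1 * deriv x t)) t :=
      ((((hxd t).pow 2).const_mul 2).sub_const (2 * γ)).sub_const 1
    have h6 := (hB t).mul h5
    have h7 := ((h1.add h4).add h6).div_const (1 + 2 * a)
    refine h7.congr_deriv (Eq.symm ?_)
    simp only [hWdef]
    push_cast
    field_simp [hxne t]
    ring
  -- initial values
  have hW0 : W 0 = -1 := by
    simp only [hWdef, hx0, hx'0, hZ0]
    field_simp
    rw [hγ]; ring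
  have hW10 : W1 0 = 0 := by
    simp only [hW1def, hx0, hx'0, hZ0]
    ring
  -- uniqueness: w = W on [0, kτ]
  have hw'c : Continuous (deriv w) := (hw2.2.2.differentiable one_ne_zero).continuous
  have huniq : ∀ k : ℕ, w ((k : ℝ) * τ) = W ((k : ℝ) * τ) := by
    intro k
    set b : ℝ := (k : ℝ) * τ with hbdef
    have hb0 : (0 : ℝ) ≤ b := by positivity
    set q : ℝ → ℝ := fun t => -2 * ((x t) ^ 2 + γ ^ 2 / (x t) ^ 2) with hqdef
    have hqc : Continuous q := by
      apply Continuous.mul continuous_const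
      exact (hxc.pow 2).add (continuous_const.div (hxc.pow 2)
        (fun t => pow_ne_zero 2 (hxne t)))
    have hqcon : ContinuousOn q (Set.Icc 0 b) := hqc.continuousOn
    obtain ⟨C, hC⟩ := isCompact_Icc.exists_bound_of_continuousOn hqcon
    have hCmax : (0 : ℝ) ≤ max 1 C := le_trans zero_le_one (le_max_left 1 C)
    set K : NNReal := ⟨max 1 C, hCmax⟩ with hKdef
    have hK1 : (1 : ℝ) ≤ (K : ℝ) := le_max_left 1 C
    have hKC : C ≤ (K : ℝ) := le_max_right 1 C
    set v : ℝ → ℝ × ℝ → ℝ × ℝ := fun t p => (p.2, q (max 0 (min t b)) * p.1) with hvdef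
    have hclamp : ∀ t : ℝ, max 0 (min t b) ∈ Set.Icc 0 b :=
      fun t => ⟨le_max_left _ _, max_le hb0 (min_le_right t b)⟩
    have hv : ∀ t, LipschitzWith K (v t) := by
      intro t
      apply LipschitzWith.of_dist_le_mul
      intro p p'
      have hq : |q (max 0 (min t b))| ≤ C := hC _ (hclamp t)
      simp only [hvdef, Prod.dist_eq, Real.dist_eq]
      have hd1 : (0 : ℝ) ≤ max |p.1 - p'.1| |p.2 - p'.2| :=
        le_trans (abs_nonneg _) (le_max_left _ _)
      apply max_le
      · calc |p.2 - p'.2| ≤ max |p.1 - p'.1| |p.2 - p'.2| := le_max_right _ _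
          _ ≤ (K : ℝ) * max |p.1 - p'.1| |p.2 - p'.2| := le_mul_of_one_le_left hd1 hK1
      · calc |q (max 0 (min t b)) * p.1 - q (max 0 (min t b)) * p'.1|
            = |q (max 0 (min t b))| * |p.1 - p'.1| := by rw [← mul_sub, abs_mul]
          _ ≤ (K : ℝ) * max |p.1 - p'.1| |p.2 - p'.2| := by
              apply mul_le_mul (le_trans hq hKC) (le_max_left _ _) (abs_nonneg _)
                (le_trans (le_trans zero_le_one hK1) le_rfl)
    set F : ℝ → ℝ × ℝ := fun t => (w t, deriv w t) with hFdef
    set G : ℝ → ℝ × ℝ := fun t => (W t, W1 t) with hGdef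
    have hFc : Continuous F := hwc.prodMk hw'c
    have hGc : Continuous G := continuous_iff_continuousAt.2 fun t =>
      ((hWd t).differentiableAt.continuousAt).prodMk ((hW1d t).differentiableAt.continuousAt)
    have hF' : ∀ t ∈ Set.Ico (0 : ℝ) b, HasDerivWithinAt F (v t (F t)) (Set.Ici t) t := by
      intro t ht
      have hcl : max 0 (min t b) = t := by
        rw [min_eq_left ht.2.le, max_eq_right ht.1]
      have h := ((hwd t).prodMk (hwd2 t)).hasDerivWithinAt (s := Set.Ici t)
      refine h.congr_deriv (Eq.symm ?_)
      simp only [hvdef, hFdef, hcl, hqdef]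
    have hG' : ∀ t ∈ Set.Ico (0 : ℝ) b, HasDerivWithinAt G (v t (G t)) (Set.Ici t) t := by
      intro t ht
      have hcl : max 0 (min t b) = t := by
        rw [min_eq_left ht.2.le, max_eq_right ht.1]
      have h := ((hWd t).prodMk (hW1d t)).hasDerivWithinAt (s := Set.Ici t)
      refine h.congr_deriv (Eq.symm ?_)
      simp only [hvdef, hGdef, hcl, hqdef]
    have hinit : F 0 = G 0 := by
      simp only [hFdef, hGdef, hw0, hw'0, hW0, hW10]
    have heq := ODE_solution_unique_of_mem_Icc_right (s := fun _ => Set.univ)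
      (fun t _ => ((hv t).lipschitzOnWith : LipschitzOnWith K (v t) Set.univ)) hFc.continuousOn hF' (fun _ _ => trivial)
      hGc.continuousOn hG' (fun _ _ => trivial) hinit
    have hb : b ∈ Set.Icc (0 : ℝ) b := Set.right_mem_Icc.2 hb0
    have := heq hb
    exact congrArg Prod.fst this
  -- conclusion
  intro k
  rw [huniq k]
  have hc := hcrit k
  rcases Nat.even_or_odd k with ⟨n, rfl⟩ | ⟨n, rfl⟩
  · have hxv : x (((n + n : ℕ) : ℝ) * τ) = 1 + a := by
      have : ((n + n : ℕ) : ℝ) * τ = 2 * (n : ℝ) * τ := by push_cast; ring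
      rw [this]; exact (hval n).1
    have hpow : (-1 : ℝ) ^ ((n + n) + 1) = -1 := Odd.neg_one_pow ⟨n, by omega⟩
    rw [hpow]
    simp only [hWdef, hc, hxv]
    field_simp
    rw [hγ]; ring
  · have hxv : x (((2 * n + 1 : ℕ) : ℝ) * τ) = |a| := by
      have : ((2 * n + 1 : ℕ) : ℝ) * τ = (2 * (n : ℝ) + 1) * τ := by push_cast; ring
      rw [this]; exact (hval n).2
    have hpow : (-1 : ℝ) ^ ((2 * n + 1) + 1) = 1 := Even.neg_one_pow ⟨n + 1, by omega⟩
    rw [hpow]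
    simp only [hWdef, hc, hxv]
    rw [div_eq_one_iff_eq h2a, sq_abs, hγ]
    ring
end
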